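/- arXiv:2001.04838 — 4 statements merged into one kernel-verified Lean document; each statement's English description precedes it below -/
import Mathlib

section
/- Let p be an odd prime and m ≥ 1 an integer. Then the twisted Kloosterman moment S(m+1,φ) := Σ_{c ∈ 𝔽_p^×} φ(c)·K(c)^{m+1} satisfies S(m+1,φ) = p·φ(−1)·Σ_{x₁,…,x_m ∈ 𝔽_p^×} φ(x₁ + x₂ + ⋯ + x_m + 1)·φ(x₁⁻¹ + x₂⁻¹ + ⋯ + x_m⁻¹ + 1). -/
open Finset

/-- The quadratic character of `ZMod p`, with values in `ℂ` (vanishing at `0`). -/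
noncomputable def Φ (p : ℕ) [Fact p.Prime] : MulChar (ZMod p) ℂ :=
  (quadraticChar (ZMod p)).ringHomComp (Int.castRingHom ℂ)

/-- The standard additive character `x ↦ e^(2πi x̃ / p)` of `ZMod p`. -/
noncomputable def θ (p : ℕ) (x : ZMod p) : ℂ :=
  Complex.exp (2 * Real.pi * Complex.I * (x.val : ℂ) / p)

/-- The Kloosterman sum `K(a) = Σ_{x ∈ 𝔽_p^×} θ(x + a x⁻¹)`. -/
noncomputable def K (p : ℕ) [Fact p.Prime] (a : ZMod p) : ℂ :=
  ∑ x ∈ univ.filter (fun x : ZMod p => x ≠ 0), θ p (x + a * x⁻¹)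

section Aux

variable (p : ℕ) [Fact p.Prime]

lemma pC_ne_zero : (p : ℂ) ≠ 0 := by
  exact_mod_cast (Fact.out : p.Prime).ne_zero

lemma theta_congr {u v : ℕ} (h : (u : ZMod p) = (v : ZMod p)) :
    Complex.exp (2 * Real.pi * Complex.I * (u : ℂ) / p) =
      Complex.exp (2 * Real.pi * Complex.I * (v : ℂ) / p) := by
  have hmod : u ≡ v [MOD p] := (ZMod.natCast_eq_natCast_iff u v p).mp h
  obtain ⟨k, hk⟩ := (Nat.modEq_iff_dvd).mp hmod
  have hv : (v : ℂ) = (u : ℂ) + (p : ℂ) * (k : ℂ) := by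
    have : (v : ℤ) = (u : ℤ) + (p : ℤ) * k := by linarith [hk]
    exact_mod_cast congrArg (fun z : ℤ => (z : ℂ)) this
  have hp : (p : ℂ) ≠ 0 := pC_ne_zero p
  rw [show 2 * Real.pi * Complex.I * (v : ℂ) / p
      = 2 * Real.pi * Complex.I * (u : ℂ) / p + k * (2 * Real.pi * Complex.I) by
    rw [hv]; field_simp]
  rw [Complex.exp_add, Complex.exp_int_mul_two_pi_mul_I, mul_one]

lemma theta_zero : θ p 0 = 1 := by
  haveI : NeZero p := ⟨(Fact.out : p.Prime).ne_zero⟩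
  simp [θ]

lemma theta_add (a b : ZMod p) : θ p (a + b) = θ p a * θ p b := by
  haveI : NeZero p := ⟨(Fact.out : p.Prime).ne_zero⟩
  unfold θ
  rw [← Complex.exp_add]
  have h : ((a.val + b.val : ℕ) : ZMod p) = (((a + b).val : ℕ) : ZMod p) := by
    push_cast [ZMod.natCast_rightInverse a, ZMod.natCast_rightInverse b,
      ZMod.natCast_rightInverse (a + b)]
    simp [ZMod.natCast_rightInverse a]
  have := theta_congr p h.symm
  rw [this]
  push_cast
  congr 1
  ring

noncomputable def ψ (p : ℕ) [Fact p.Prime] : AddChar (ZMod p) ℂ where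
  toFun := θ p
  map_zero_eq_one' := theta_zero p
  map_add_eq_mul' := theta_add p

lemma psi_apply (x : ZMod p) : ψ p x = θ p x := rfl

lemma psi_ne_one : ψ p ≠ 1 := by
  haveI : Fact (1 < p) := ⟨(Fact.out : p.Prime).one_lt⟩
  intro h
  have h1 : ψ p 1 = 1 := by rw [h]; rfl
  rw [psi_apply, θ, ZMod.val_one] at h1
  rw [Complex.exp_eq_one_iff] at h1
  obtain ⟨n, hn⟩ := h1
  have h2 : (2 * (Real.pi : ℂ) * Complex.I) ≠ 0 := by
    simp [Real.pi_ne_zero, Complex.I_ne_zero]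
  have hp : (p : ℂ) ≠ 0 := pC_ne_zero p
  have : (n : ℂ) * p = 1 := by
    have h3 : (2 * (Real.pi : ℂ) * Complex.I) * 1 = (2 * (Real.pi : ℂ) * Complex.I) * ((n:ℂ) * p) := by
      field_simp at hn
      linear_combination (2 * (Real.pi : ℂ) * Complex.I) * hn
    exact (mul_left_cancel₀ h2 h3).symm

  have : (n * p : ℤ) = 1 := by exact_mod_cast this
  have hple : (p : ℤ) ∣ 1 := Dvd.intro n (by linarith)
  have := Int.le_of_dvd one_pos hple
  have : 2 ≤ (p : ℤ) := by exact_mod_cast (Fact.out : p.Prime).two_le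
  omega


lemma phi_ne_one (hodd : Odd p) : Φ p ≠ 1 := by
  have hchar : ringChar (ZMod p) ≠ 2 := by
    rw [ZMod.ringChar_zmod_n]
    rintro rfl
    simp [Nat.odd_iff] at hodd
  exact (MulChar.ringHomComp_ne_one_iff (Int.cast_injective)).mpr
    (quadraticChar_ne_one hchar)

lemma phi_quadratic : (Φ p).IsQuadratic :=
  (quadraticChar_isQuadratic (ZMod p)).comp _

lemma phi_zero : Φ p 0 = 0 := by
  haveI : Fact (1 < p) := ⟨(Fact.out : p.Prime).one_lt⟩
  exact MulChar.map_zero _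

lemma phi_inv (t : ZMod p) : Φ p t⁻¹ = Φ p t := by
  by_cases ht : t = 0
  · simp [ht]
  · have h1 : Φ p t⁻¹ * Φ p t = 1 := by
      rw [← map_mul, inv_mul_cancel₀ ht, map_one]
    rcases phi_quadratic p t with h | h | h
    · rw [h, mul_zero] at h1; exact absurd h1.symm one_ne_zero
    · rw [h] at h1 ⊢; simpa using h1
    · rw [h] at h1 ⊢; linear_combination -h1

lemma phi_sum_zero (hodd : Odd p) : ∑ c : ZMod p, Φ p c = 0 :=
  MulChar.sum_eq_zero_of_ne_one (phi_ne_one p hodd)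

lemma key_sum (hodd : Odd p) (t : ZMod p) :
    ∑ c : ZMod p, Φ p c * θ p (c * t) = Φ p t * gaussSum (Φ p) (ψ p) := by
  by_cases ht : t = 0
  · subst ht
    simp only [mul_zero, theta_zero, mul_one]
    rw [phi_sum_zero p hodd, phi_zero, zero_mul]
  · have h1 : ∑ c : ZMod p, Φ p c * θ p (c * t)
        = ∑ d : ZMod p, Φ p (d * t⁻¹) * θ p d := by
      refine Fintype.sum_equiv (Equiv.mulRight₀ t ht) _ _ fun c => ?_
      simp only [Equiv.coe_fn_mk, Equiv.mulRight₀_apply]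
      rw [mul_assoc, mul_inv_cancel₀ ht, mul_one]
    rw [h1]
    simp only [map_mul, phi_inv]
    rw [gaussSum, Finset.mul_sum]
    refine Finset.sum_congr rfl fun d _ => ?_
    show Φ p d * Φ p t * θ p d = Φ p t * (Φ p d * ψ p d)
    rw [psi_apply]; ring

lemma gauss_sq (hodd : Odd p) :
    gaussSum (Φ p) (ψ p) * gaussSum (Φ p) (ψ p) = Φ p (-1) * p := by
  have h := gaussSum_sq (phi_ne_one p hodd) (phi_quadratic p)
    (AddChar.IsPrimitive.of_ne_one (psi_ne_one p))
  rw [← pow_two, h, ZMod.card]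

lemma theta_sum {n : ℕ} (f : Fin n → ZMod p) :
    θ p (∑ i, f i) = ∏ i, θ p (f i) := by
  induction n with
  | zero => simp [theta_zero]
  | succ n ih =>
    rw [Fin.sum_univ_succ, Fin.prod_univ_succ, theta_add, ih]

end Aux

/-- The reparametrization `(a, y) ↦ (a, a·y₀, …, a·y_{m-1})` of nonzero tuples. -/
def E (p : ℕ) [Fact p.Prime] (m : ℕ) :
    {c : ZMod p // c ≠ 0} × (Fin m → {c : ZMod p // c ≠ 0}) ≃
      (Fin (m + 1) → {c : ZMod p // c ≠ 0}) where
  toFun z := Fin.cons z.1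
    (fun i => ⟨(z.1 : ZMod p) * (z.2 i : ZMod p), mul_ne_zero z.1.2 (z.2 i).2⟩)
  invFun x := (x 0, fun i => ⟨((x 0 : ZMod p))⁻¹ * (x i.succ : ZMod p),
    mul_ne_zero (inv_ne_zero (x 0).2) (x i.succ).2⟩)
  left_inv z := by
    obtain ⟨a, y⟩ := z
    refine Prod.ext ?_ ?_
    · simp
    · funext i
      apply Subtype.ext
      simp only [Fin.cons_succ, Fin.cons_zero]
      rw [← mul_assoc, inv_mul_cancel₀ a.2, one_mul]
  right_inv x := by
    funext j
    refine Fin.cases ?_ ?_ j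
    · simp
    · intro i
      apply Subtype.ext
      simp only [Fin.cons_succ, Fin.cons_zero]
      rw [← mul_assoc, mul_inv_cancel₀ (x 0).2, one_mul]


/-- **Twisted Kloosterman moment (Dummit–Goldberg–Perry).** For `m ≥ 1`,
`S(m+1,φ) = Σ_{c ≠ 0} φ(c) K(c)^(m+1)
  = p φ(-1) Σ_{x₁,…,x_m ≠ 0} φ(x₁+⋯+x_m+1) φ(x₁⁻¹+⋯+x_m⁻¹+1)`. -/
theorem twisted_kloosterman_moment (p : ℕ) [Fact p.Prime] (hp : Odd p)
    (m : ℕ) (hm : 1 ≤ m) :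
    ∑ c ∈ univ.filter (fun c : ZMod p => c ≠ 0), Φ p c * K p c ^ (m + 1) =
      (p : ℂ) * Φ p (-1) *
        ∑ x : Fin m → {c : ZMod p // c ≠ 0},
          Φ p ((∑ i, (x i : ZMod p)) + 1) * Φ p ((∑ i, ((x i : ZMod p))⁻¹) + 1) := by
  haveI : NeZero p := ⟨(Fact.out : p.Prime).ne_zero⟩
  set g := gaussSum (Φ p) (ψ p) with hg
  -- Step 1: expand the power of the Kloosterman sum
  have hK : ∀ c : ZMod p, K p c ^ (m + 1) =
      ∑ x : Fin (m + 1) → {c : ZMod p // c ≠ 0},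
        θ p ((∑ i, (x i : ZMod p)) + c * (∑ i, ((x i : ZMod p))⁻¹)) := by
    intro c
    have h0 : K p c = ∑ x : {c : ZMod p // c ≠ 0},
        θ p ((x : ZMod p) + c * (x : ZMod p)⁻¹) :=
      Finset.sum_subtype _ (by simp) _
    rw [h0, Fintype.sum_pow]
    refine Finset.sum_congr rfl fun x _ => ?_
    rw [← theta_sum]
    congr 1
    rw [Finset.sum_add_distrib, ← Finset.mul_sum]
  -- Step 2: sum over c
  have step1 : ∑ c ∈ univ.filter (fun c : ZMod p => c ≠ 0), Φ p c * K p c ^ (m + 1)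
      = ∑ x : Fin (m + 1) → {c : ZMod p // c ≠ 0},
          θ p (∑ i, (x i : ZMod p)) * (Φ p (∑ i, ((x i : ZMod p))⁻¹) * g) := by
    have h2 : ∀ c : ZMod p, Φ p c * K p c ^ (m + 1)
        = ∑ x : Fin (m + 1) → {c : ZMod p // c ≠ 0},
            θ p (∑ i, (x i : ZMod p)) * (Φ p c * θ p (c * (∑ i, ((x i : ZMod p))⁻¹))) := by
      intro c
      rw [hK c, Finset.mul_sum]
      refine Finset.sum_congr rfl fun x _ => ?_
      rw [theta_add]; ring
    rw [Finset.sum_filter_of_ne (fun c _ h => by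
      intro hc; apply h; rw [hc, phi_zero, zero_mul])]
    rw [Finset.sum_congr rfl fun c _ => h2 c, Finset.sum_comm]
    refine Finset.sum_congr rfl fun x _ => ?_
    rw [← Finset.mul_sum, key_sum p hp]
  -- the inner Gauss-type sum
  have hinner : ∀ A' B' : ZMod p,
      (∑ a : {c : ZMod p // c ≠ 0},
        θ p ((a : ZMod p) * A') * (Φ p (((a : ZMod p))⁻¹ * B') * g))
      = Φ p A' * Φ p B' * (Φ p (-1) * p) := by
    intro A' B'
    have h1 : (∑ a : {c : ZMod p // c ≠ 0},
          θ p ((a : ZMod p) * A') * (Φ p (((a : ZMod p))⁻¹ * B') * g))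
        = ∑ t : ZMod p, θ p (t * A') * (Φ p (t⁻¹ * B') * g) := by
      rw [← Finset.sum_subtype (univ.filter (fun c : ZMod p => c ≠ 0)) (by simp)
        (fun t : ZMod p => θ p (t * A') * (Φ p (t⁻¹ * B') * g))]
      exact Finset.sum_filter_of_ne (fun t _ h => by
        intro ht; apply h; rw [ht]; simp [phi_zero])
    rw [h1]
    have h2 : ∀ t : ZMod p, θ p (t * A') * (Φ p (t⁻¹ * B') * g)
        = (Φ p B' * g) * (Φ p t * θ p (t * A')) := by
      intro t; rw [map_mul, phi_inv]; ring
    simp only [h2]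
    rw [← Finset.mul_sum, key_sum p hp A']
    calc Φ p B' * g * (Φ p A' * g) = Φ p A' * Φ p B' * (g * g) := by ring
      _ = Φ p A' * Φ p B' * (Φ p (-1) * p) := by rw [gauss_sq p hp]
  -- Step 3: reparametrize the tuples
  have hA : ∀ (a : {c : ZMod p // c ≠ 0}) (y : Fin m → {c : ZMod p // c ≠ 0}),
      (∑ i : Fin (m + 1), ((E p m (a, y)) i : ZMod p))
        = (a : ZMod p) * ((∑ i, (y i : ZMod p)) + 1) := by
    intro a y
    rw [Fin.sum_univ_succ]
    simp only [E, Equiv.coe_fn_mk, Fin.cons_zero, Fin.cons_succ]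
    rw [mul_add, mul_one, Finset.mul_sum]
    exact add_comm _ _
  have hB : ∀ (a : {c : ZMod p // c ≠ 0}) (y : Fin m → {c : ZMod p // c ≠ 0}),
      (∑ i : Fin (m + 1), ((E p m (a, y)) i : ZMod p)⁻¹)
        = (a : ZMod p)⁻¹ * ((∑ i, ((y i : ZMod p))⁻¹) + 1) := by
    intro a y
    rw [Fin.sum_univ_succ]
    simp only [E, Equiv.coe_fn_mk, Fin.cons_zero, Fin.cons_succ, mul_inv]
    rw [mul_add, mul_one, Finset.mul_sum]
    exact add_comm _ _
  rw [step1, ← Equiv.sum_comp (E p m) (fun x => θ p (∑ i, (x i : ZMod p)) *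
    (Φ p (∑ i, ((x i : ZMod p))⁻¹) * g))]
  rw [Finset.sum_congr rfl (fun z _ => by rw [hA z.1 z.2, hB z.1 z.2])]
  rw [Fintype.sum_prod_type, Finset.sum_comm]
  rw [Finset.sum_congr rfl (fun y _ => hinner ((∑ i, (y i : ZMod p)) + 1)
    ((∑ i, ((y i : ZMod p))⁻¹) + 1))]
  rw [Finset.mul_sum]
  exact Finset.sum_congr rfl fun y _ => by ring
end

section
/- Let p be an odd prime. Then F(1) = H₂(−1)² − p·φ(−1) and F(−1) = φ(−1)·H₂(1)² − p·φ(−1); equivalently, φ(−1)F(1) = p²φ(−1)·₂F₁(φ,φ;ε|−1)² − p and φ(−1)F(−1) = p²·₂F₁(φ,φ;ε|1)² − p. -/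
open Finset

/-- `H₂(x) = Σ_u φ(u) φ(1-u) φ(1-xu)`, so that `₂F₁(φ,φ;ε|x) = φ(-1) H₂(x) / p`. -/
noncomputable def H₂ (p : ℕ) [Fact p.Prime] (x : ZMod p) : ℂ :=
  ∑ u : ZMod p, Φ p u * Φ p (1 - u) * Φ p (1 - x * u)

/-- `F(a) = Σ_{x,y ∈ 𝔽_p^×} φ(x+y+a+1) φ(x⁻¹+y⁻¹+a⁻¹+1)`. -/
noncomputable def Fsum (p : ℕ) [Fact p.Prime] (a : ZMod p) : ℂ :=
  ∑ x ∈ univ.filter (fun x : ZMod p => x ≠ 0),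
    ∑ y ∈ univ.filter (fun y : ZMod p => y ≠ 0),
      Φ p (x + y + a + 1) * Φ p (x⁻¹ + y⁻¹ + a⁻¹ + 1)

namespace DGPaux

variable {p : ℕ} [Fact p.Prime]

local notation "χ" => Φ p

lemma hchar (hp : Odd p) : ringChar (ZMod p) ≠ 2 := by
  rw [ZMod.ringChar_zmod_n]; rintro rfl; exact (Nat.not_odd_iff_even.mpr even_two) hp

lemma two_ne (hp : Odd p) : (2 : ZMod p) ≠ 0 := Ring.two_ne_zero (hchar hp)

lemma chi_mul (a b : ZMod p) : χ (a * b) = χ a * χ b := map_mul _ _ _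

lemma chi_zero : χ (0 : ZMod p) = 0 := by simp [Φ]

lemma chi_one : χ (1 : ZMod p) = 1 := map_one _

lemma chi_sq {a : ZMod p} (ha : a ≠ 0) : χ a * χ a = 1 := by
  have h := quadraticChar_sq_one ha
  show ((quadraticChar (ZMod p) a : ℤ) : ℂ) * ((quadraticChar (ZMod p) a : ℤ) : ℂ) = 1
  rw [← Int.cast_mul, ← sq]
  exact_mod_cast congrArg (fun n : ℤ => (n : ℂ)) (by exact_mod_cast h)

lemma chi_sq' {a : ZMod p} (ha : a ≠ 0) : χ (a * a) = 1 := by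
  rw [chi_mul, chi_sq ha]

lemma chi_inv (a : ZMod p) : χ a⁻¹ = χ a := by
  by_cases ha : a = 0
  · rw [ha, inv_zero]
  · calc χ a⁻¹ = χ a⁻¹ * (χ a * χ a) := by rw [chi_sq ha, mul_one]
    _ = χ (a⁻¹ * a) * χ a := by rw [chi_mul]; ring
    _ = χ a := by rw [inv_mul_cancel₀ ha, chi_one, one_mul]

lemma sum_chi (hp : Odd p) : ∑ a : ZMod p, χ a = 0 := by
  have h := quadraticChar_sum_zero (hchar hp)
  calc ∑ a : ZMod p, χ a = ((∑ a : ZMod p, (quadraticChar (ZMod p) a) : ℤ) : ℂ) := by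
        push_cast [Φ]; rfl
  _ = 0 := by rw [h]; simp

lemma sum_affine {a : ZMod p} (ha : a ≠ 0) (b : ZMod p) (f : ZMod p → ℂ) :
    ∑ z : ZMod p, f (a * z + b) = ∑ z : ZMod p, f z := by
  apply Fintype.sum_equiv ((Equiv.mulLeft₀ a ha).trans (Equiv.addRight b))
  intro z; rfl

lemma sum_shift (b : ZMod p) (f : ZMod p → ℂ) :
    ∑ z : ZMod p, f (z + b) = ∑ z : ZMod p, f z := by
  have := sum_affine (a := (1 : ZMod p)) one_ne_zero b f
  simpa using this

lemma sum_inv (f : ZMod p → ℂ) : ∑ z : ZMod p, f z⁻¹ = ∑ z : ZMod p, f z := by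
  apply Fintype.sum_equiv ⟨fun z : ZMod p => z⁻¹, fun z => z⁻¹, fun z => inv_inv z,
    fun z => inv_inv z⟩
  intro z; rfl

lemma sum_chi_shift (hp : Odd p) (b : ZMod p) : ∑ z : ZMod p, χ (z + b) = 0 := by
  rw [sum_shift b (fun z => χ z), sum_chi hp]

lemma sum_sq_count (hp : Odd p) (f : ZMod p → ℂ) :
    ∑ r : ZMod p, f (r ^ 2) = ∑ w : ZMod p, (1 + χ w) * f w := by
  have hcard : ∀ w : ZMod p,
      ((univ.filter (fun r : ZMod p => r ^ 2 = w)).card : ℂ) = 1 + χ w := by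
    intro w
    have h := quadraticChar_card_sqrts (hchar hp) w
    rw [Set.toFinset_setOf] at h
    have h3 := congrArg (fun n : ℤ => (n : ℂ)) h
    push_cast at h3
    show _ = 1 + ((quadraticChar (ZMod p) w : ℤ) : ℂ)
    push_cast
    rw [h3]; ring
  rw [← Finset.sum_fiberwise univ (fun r : ZMod p => r ^ 2) (fun r => f (r ^ 2))]
  refine Finset.sum_congr rfl fun w _ => ?_
  rw [Finset.sum_congr rfl (fun r hr => by rw [(Finset.mem_filter.mp hr).2] :
      ∀ r ∈ univ.filter (fun r : ZMod p => r ^ 2 = w), f (r ^ 2) = f w),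
    Finset.sum_const, nsmul_eq_mul, hcard]

lemma sum_chi_sq : ∑ z : ZMod p, χ z * χ z = (p : ℂ) - 1 := by
  have key : ∀ z : ZMod p, χ z * χ z = 1 - (if z = 0 then (1:ℂ) else 0) := by
    intro z
    by_cases hz : z = 0
    · simp [hz, chi_zero]
    · rw [chi_sq hz, if_neg hz, sub_zero]
  rw [Finset.sum_congr rfl fun z _ => key z, Finset.sum_sub_distrib,
    Finset.sum_ite_eq' univ (0 : ZMod p) (fun _ => (1:ℂ)), Finset.sum_const]
  simp [ZMod.card]

lemma L1 (hp : Odd p) {c : ZMod p} (hc : c ≠ 0) :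
    ∑ z : ZMod p, χ z * χ (z + c) = -1 := by
  have key : ∀ z : ZMod p, χ z * χ (z + c) = χ (1 + c * z⁻¹) - (if z = 0 then (1:ℂ) else 0) :=
    by
    intro z
    by_cases hz : z = 0
    · simp [hz, chi_zero, chi_one]
    · have hzc : z + c = z * (1 + c * z⁻¹) := by field_simp
      rw [hzc, chi_mul, if_neg hz, sub_zero, ← mul_assoc, chi_sq hz, one_mul]
  rw [Finset.sum_congr rfl fun z _ => key z, Finset.sum_sub_distrib]
  have h1 : ∑ z : ZMod p, χ (1 + c * z⁻¹) = 0 := by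
    rw [sum_inv (fun z => χ (1 + c * z))]
    have := sum_affine hc 1 (fun z => χ z)
    simp only [add_comm] at this ⊢
    rw [this, sum_chi hp]
  rw [h1, Finset.sum_ite_eq' univ (0 : ZMod p) (fun _ => (1:ℂ))]
  simp

lemma L1sub (hp : Odd p) {a b : ZMod p} (hab : a ≠ b) :
    ∑ w : ZMod p, χ (w - a) * χ (w - b) = -1 := by
  have h := sum_shift (p := p) a (fun w => χ (w - a) * χ (w - b))
  rw [← h]
  have : ∀ w : ZMod p, χ (w + a - a) * χ (w + a - b) = χ w * χ (w + (a - b)) := by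
    intro w; ring_nf
  rw [Finset.sum_congr rfl fun w _ => this w]
  exact L1 hp (sub_ne_zero.mpr hab)

lemma H2_one (hp : Odd p) : H₂ p 1 = -1 := by
  have key : ∀ u : ZMod p, χ u * χ (1 - u) * χ (1 - 1 * u)
      = χ u - (if u = 1 then (1:ℂ) else 0) := by
    intro u
    by_cases hu : u = 1
    · simp [hu, chi_zero]
    · have h1u : (1 : ZMod p) - u ≠ 0 := by
        intro h; exact hu (by linear_combination -h)
      rw [one_mul, if_neg hu, sub_zero, mul_assoc, chi_sq h1u, mul_one]
  rw [H₂, Finset.sum_congr rfl fun u _ => key u, Finset.sum_sub_distrib, sum_chi hp,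
    Finset.sum_ite_eq' univ (1 : ZMod p) (fun _ => (1:ℂ))]
  simp

lemma Kcub {d : ZMod p} (hd : d ≠ 0) :
    ∑ z : ZMod p, χ z * χ (1 - z) * χ (z - d) = χ (-d) * H₂ p d⁻¹ := by
  have hnd : (-d : ZMod p) ≠ 0 := neg_ne_zero.mpr hd
  rw [H₂, Finset.mul_sum]
  refine Finset.sum_congr rfl fun u _ => ?_
  have harg : (1 : ZMod p) - d⁻¹ * u = -d⁻¹ * (u - d) := by field_simp; ring
  rw [harg, chi_mul, show (-d⁻¹ : ZMod p) = (-d)⁻¹ by rw [inv_neg], chi_inv]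
  have : χ (-d) * (χ u * χ (1 - u) * (χ (-d) * χ (u - d)))
      = (χ (-d) * χ (-d)) * (χ u * χ (1 - u) * χ (u - d)) := by ring
  rw [this, chi_sq hnd, one_mul]

lemma sum_chi_one_sub (hp : Odd p) : ∑ z : ZMod p, χ z * χ (1 - z) = -χ (-1) := by
  have key : ∀ z : ZMod p, χ z * χ (1 - z) = χ (-1) * (χ z * χ (z + (-1))) := by
    intro z
    have : (1 : ZMod p) - z = -1 * (z + (-1)) := by ring
    rw [this, chi_mul]; ring
  rw [Finset.sum_congr rfl fun z _ => key z, ← Finset.mul_sum,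
    L1 hp (c := (-1 : ZMod p)) (neg_ne_zero.mpr one_ne_zero)]
  ring

lemma C1 (hp : Odd p) : ∑ v : ZMod p, χ v * H₂ p v = χ (-1) := by
  have hexp : ∑ v : ZMod p, χ v * H₂ p v
      = ∑ u : ZMod p, ∑ v : ZMod p, χ v * (χ u * χ (1 - u) * χ (1 - v * u)) := by
    rw [Finset.sum_comm]
    refine Finset.sum_congr rfl fun v _ => ?_
    rw [H₂, Finset.mul_sum]
  rw [hexp]
  have key : ∀ u : ZMod p, ∑ v : ZMod p, χ v * (χ u * χ (1 - u) * χ (1 - v * u))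
      = (-χ (-1)) * (χ (1 - u) - (if u = 0 then (1:ℂ) else 0)) := by
    intro u
    by_cases hu : u = 0
    · simp [hu, chi_zero, chi_one]
    · have h1 : ∑ v : ZMod p, χ v * (χ u * χ (1 - u) * χ (1 - v * u))
          = χ u * χ (1 - u) * ∑ v : ZMod p, χ v * χ (1 - v * u) := by
        rw [Finset.mul_sum]; refine Finset.sum_congr rfl fun v _ => ?_; ring
      have h2 : ∑ v : ZMod p, χ v * χ (1 - v * u)
          = χ u * ∑ z : ZMod p, χ z * χ (1 - z) := by
        have hinv : (u⁻¹ : ZMod p) ≠ 0 := inv_ne_zero hu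
        have := sum_affine hinv 0 (fun v => χ v * χ (1 - v * u))
        simp only [add_zero] at this
        rw [← this, Finset.mul_sum]
        refine Finset.sum_congr rfl fun z _ => ?_
        rw [chi_mul, chi_inv, show u⁻¹ * z * u = z by field_simp]
        ring
      rw [h1, h2, sum_chi_one_sub hp, if_neg hu, sub_zero]
      have : χ u * χ (1 - u) * (χ u * -χ (-1)) = (χ u * χ u) * χ (1 - u) * -χ (-1) := by ring
      rw [this, chi_sq hu]; ring
  rw [Finset.sum_congr rfl fun u _ => key u, ← Finset.mul_sum, Finset.sum_sub_distrib]
  have h3 : ∑ u : ZMod p, χ (1 - u) = 0 := by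
    have := sum_affine (a := (-1 : ZMod p)) (neg_ne_zero.mpr one_ne_zero) 1 (fun z => χ z)
    rw [sum_chi hp] at this
    rw [← this]
    refine Finset.sum_congr rfl fun u _ => ?_
    ring_nf
  rw [h3, Finset.sum_ite_eq' univ (0 : ZMod p) (fun _ => (1:ℂ))]
  simp only [mem_univ, if_true, zero_sub]
  have := chi_sq (a := (-1 : ZMod p)) (neg_ne_zero.mpr one_ne_zero)
  calc -χ (-1) * -1 = χ (-1) := by ring

lemma four_ne (hp : Odd p) : (4 : ZMod p) ≠ 0 := by
  rw [show (4 : ZMod p) = 2 * 2 by norm_num]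
  exact mul_ne_zero (two_ne hp) (two_ne hp)

lemma sum_pair (hp : Odd p) (g : ZMod p → ZMod p → ℂ) :
    ∑ x : ZMod p, ∑ y : ZMod p, g (x + y) (x * y)
      = ∑ s : ZMod p, ∑ q : ZMod p, (1 + χ (s ^ 2 - 4 * q)) * g s q := by
  have h2 : (2 : ZMod p) ≠ 0 := two_ne hp
  have h4 : (4 : ZMod p) ≠ 0 := four_ne hp
  have step1 : ∀ x : ZMod p, ∑ y : ZMod p, g (x + y) (x * y)
      = ∑ s : ZMod p, g s (x * (s - x)) := by
    intro x
    rw [← sum_shift x (fun s => g s (x * (s - x)))]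
    refine Finset.sum_congr rfl fun y _ => ?_
    rw [add_sub_cancel_right, add_comm y x]
  rw [Finset.sum_congr rfl fun x _ => step1 x, Finset.sum_comm]
  refine Finset.sum_congr rfl fun s _ => ?_
  have step3 : ∑ x : ZMod p, g s (x * (s - x))
      = ∑ r : ZMod p, g s (4⁻¹ * (s ^ 2 - r ^ 2)) := by
    have := sum_affine (a := (2⁻¹ : ZMod p)) (inv_ne_zero h2) (2⁻¹ * s)
      (fun x => g s (x * (s - x)))
    rw [← this]
    refine Finset.sum_congr rfl fun r _ => ?_
    congr 1
    have h42 : (4 : ZMod p) = 2 * 2 := by norm_num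
    field_simp [h42]
    ring
  rw [step3, sum_sq_count hp (fun w => g s (4⁻¹ * (s ^ 2 - w)))]
  rw [← sum_affine (a := (-4 : ZMod p)) (neg_ne_zero.mpr h4) (s ^ 2)
    (fun w => (1 + χ w) * g s (4⁻¹ * (s ^ 2 - w)))]
  refine Finset.sum_congr rfl fun q _ => ?_
  have e1 : (-4 : ZMod p) * q + s ^ 2 = s ^ 2 - 4 * q := by ring
  rw [e1]
  congr 2
  field_simp
  ring

lemma Aprime (hp : Odd p) :
    ∑ s : ZMod p, ∑ q : ZMod p, χ q * (χ (s + 2) * χ (s + 2 * q)) = (p : ℂ) := by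
  have hinner : ∀ s : ZMod p, s ≠ 0 →
      ∑ q : ZMod p, χ q * (χ (s + 2) * χ (s + 2 * q)) = χ (s + 2) * (-χ 2) := by
    intro s hs
    have hpull : ∑ q : ZMod p, χ q * (χ (s + 2) * χ (s + 2 * q))
        = χ (s + 2) * ∑ q : ZMod p, χ q * χ (s + 2 * q) := by
      rw [Finset.mul_sum]; exact Finset.sum_congr rfl fun q _ => by ring
    rw [hpull]
    congr 1
    have h1 := sum_affine hs 0 (fun q => χ q * χ (s + 2 * q))
    simp only [add_zero] at h1
    rw [← h1]
    have key : ∀ z : ZMod p, χ (s * z) * χ (s + 2 * (s * z)) = χ z * χ (2 * z + 1) := by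
      intro z
      have e1 : s + 2 * (s * z) = s * (2 * z + 1) := by ring
      rw [e1, chi_mul, chi_mul]
      have : χ s * χ z * (χ s * χ (2 * z + 1)) = (χ s * χ s) * (χ z * χ (2 * z + 1)) := by ring
      rw [this, chi_sq hs, one_mul]
    rw [Finset.sum_congr rfl fun z _ => key z]
    have h2 := sum_affine (a := (2⁻¹ : ZMod p)) (inv_ne_zero (two_ne hp)) 0
      (fun z => χ z * χ (2 * z + 1))
    simp only [add_zero] at h2
    rw [← h2]
    have key2 : ∀ w : ZMod p, χ (2⁻¹ * w) * χ (2 * (2⁻¹ * w) + 1) = χ 2⁻¹ * (χ w * χ (w + 1)) :=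
      by
      intro w
      have e1 : 2 * (2⁻¹ * w) + 1 = w + 1 := by
        rw [← mul_assoc, mul_inv_cancel₀ (two_ne hp), one_mul]
      rw [e1, chi_mul]; ring
    rw [Finset.sum_congr rfl fun w _ => key2 w, ← Finset.mul_sum, L1 hp one_ne_zero, chi_inv]
    ring
  rw [← Finset.add_sum_erase univ _ (mem_univ (0 : ZMod p))]
  have hzero : ∑ q : ZMod p, χ q * (χ ((0 : ZMod p) + 2) * χ (0 + 2 * q)) = (p : ℂ) - 1 := by
    have key : ∀ q : ZMod p, χ q * (χ ((0 : ZMod p) + 2) * χ (0 + 2 * q))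
        = (χ 2 * χ 2) * (χ q * χ q) := by
      intro q
      rw [zero_add, zero_add, chi_mul]; ring
    rw [Finset.sum_congr rfl fun q _ => key q, ← Finset.mul_sum, sum_chi_sq,
      chi_sq (two_ne hp), one_mul]
  have herase : ∑ s ∈ univ.erase (0 : ZMod p), ∑ q : ZMod p, χ q * (χ (s + 2) * χ (s + 2 * q))
      = 1 := by
    rw [Finset.sum_congr rfl fun s hs => hinner s (Finset.mem_erase.mp hs).1]
    rw [← Finset.sum_mul, Finset.sum_erase_eq_sub (mem_univ (0 : ZMod p))]
    have : ∑ s : ZMod p, χ (s + 2) = 0 := sum_chi_shift hp 2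
    rw [this, zero_add, zero_sub]
    linear_combination chi_sq (two_ne hp)
  rw [hzero, herase]; ring

lemma Alem (hp : Odd p) :
    ∑ s : ZMod p, ∑ t : ZMod p, χ t * (χ (1 - s + t) * χ (1 + s + t)) = (p : ℂ) := by
  rw [Finset.sum_comm]
  have hinner : ∀ t : ZMod p, t ≠ -1 →
      ∑ s : ZMod p, χ t * (χ (1 - s + t) * χ (1 + s + t)) = χ t * (-χ (-1)) := by
    intro t ht
    rw [← Finset.mul_sum]
    congr 1
    have h1 := sum_shift (p := p) (1 + t) (fun s => χ (2 * (1 + t) - s) * χ s)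
    have key : ∀ s : ZMod p, χ (1 - s + t) * χ (1 + s + t)
        = χ (2 * (1 + t) - (s + (1 + t))) * χ (s + (1 + t)) := by
      intro s
      have e1 : 2 * (1 + t) - (s + (1 + t)) = 1 - s + t := by ring
      have e2 : s + (1 + t) = 1 + s + t := by ring
      rw [e1, e2]
    rw [Finset.sum_congr rfl fun s _ => key s, h1]
    have key2 : ∀ s : ZMod p, χ (2 * (1 + t) - s) * χ s
        = χ (-1) * (χ s * χ (s + (-(2 * (1 + t))))) := by
      intro s
      have e1 : 2 * (1 + t) - s = -1 * (s + (-(2 * (1 + t)))) := by ring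
      rw [e1, chi_mul]; ring
    rw [Finset.sum_congr rfl fun s _ => key2 s, ← Finset.mul_sum]
    have hc : -(2 * (1 + t)) ≠ 0 := by
      intro h
      apply ht
      have h2 := two_ne hp
      have : (1 : ZMod p) + t = 0 := by
        rcases mul_eq_zero.mp (neg_eq_zero.mp h) with h' | h'
        · exact absurd h' h2
        · exact h'
      linear_combination this
    rw [L1 hp hc]
    ring
  rw [← Finset.add_sum_erase univ _ (mem_univ (-1 : ZMod p))]
  have hneg : ∑ s : ZMod p, χ (-1 : ZMod p) * (χ (1 - s + (-1)) * χ (1 + s + (-1)))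
      = (p : ℂ) - 1 := by
    have key : ∀ s : ZMod p, χ (-1 : ZMod p) * (χ (1 - s + (-1)) * χ (1 + s + (-1)))
        = (χ (-1) * χ (-1)) * (χ s * χ s) := by
      intro s
      have e1 : 1 - s + (-1 : ZMod p) = -1 * s := by ring
      have e2 : 1 + s + (-1 : ZMod p) = s := by ring
      rw [e1, e2, chi_mul]; ring
    rw [Finset.sum_congr rfl fun s _ => key s, ← Finset.mul_sum,
      chi_sq (a := (-1 : ZMod p)) (neg_ne_zero.mpr one_ne_zero), one_mul, sum_chi_sq]
  have herase : ∑ t ∈ univ.erase (-1 : ZMod p),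
      ∑ s : ZMod p, χ t * (χ (1 - s + t) * χ (1 + s + t)) = 1 := by
    rw [Finset.sum_congr rfl fun t ht => hinner t (Finset.mem_erase.mp ht).1,
      ← Finset.sum_mul, Finset.sum_erase_eq_sub (mem_univ (-1 : ZMod p)), sum_chi hp,
      zero_sub]
    linear_combination chi_sq (a := (-1 : ZMod p)) (neg_ne_zero.mpr one_ne_zero)
  rw [hneg, herase]; ring

lemma B2lem (hp : Odd p) :
    ∑ t : ZMod p, χ t * (∑ w : ZMod p, χ (w - 4 * t) * χ ((1 + t) ^ 2 - w))
      = (p : ℂ) * χ (-1) := by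
  have hinner : ∀ t : ZMod p, t ≠ 1 →
      ∑ w : ZMod p, χ (w - 4 * t) * χ ((1 + t) ^ 2 - w) = χ (-1) * (-1) := by
    intro t ht
    have key : ∀ w : ZMod p, χ (w - 4 * t) * χ ((1 + t) ^ 2 - w)
        = χ (-1) * (χ (w - (1 + t) ^ 2) * χ (w - 4 * t)) := by
      intro w
      have e1 : (1 + t) ^ 2 - w = -1 * (w - (1 + t) ^ 2) := by ring
      rw [e1, chi_mul]; ring
    rw [Finset.sum_congr rfl fun w _ => key w, ← Finset.mul_sum]
    have hne : (1 + t) ^ 2 ≠ 4 * t := by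
      intro h
      apply ht
      have : (t - 1) ^ 2 = 0 := by linear_combination h
      have := pow_eq_zero_iff (n := 2) (by norm_num) |>.mp this
      linear_combination this
    rw [L1sub hp hne]
  rw [← Finset.add_sum_erase univ _ (mem_univ (1 : ZMod p))]
  have hone : χ (1 : ZMod p) * (∑ w : ZMod p, χ (w - 4 * 1) * χ ((1 + 1) ^ 2 - w))
      = χ (-1) * ((p : ℂ) - 1) := by
    rw [chi_one, one_mul]
    have key : ∀ w : ZMod p, χ (w - 4 * 1) * χ ((1 + 1) ^ 2 - w)
        = χ (-1) * (χ (w + (-4)) * χ (w + (-4))) := by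
      intro w
      have e1 : (1 + 1 : ZMod p) ^ 2 - w = -1 * (w + (-4)) := by ring
      have e2 : w - 4 * 1 = w + (-4 : ZMod p) := by ring
      rw [e1, e2, chi_mul]; ring
    rw [Finset.sum_congr rfl fun w _ => key w, ← Finset.mul_sum,
      sum_shift (p := p) (-4) (fun w => χ w * χ w), sum_chi_sq]
  have herase : ∑ t ∈ univ.erase (1 : ZMod p),
      χ t * (∑ w : ZMod p, χ (w - 4 * t) * χ ((1 + t) ^ 2 - w)) = χ (-1) := by
    rw [Finset.sum_congr rfl fun t ht =>
      congrArg (χ t * ·) (hinner t (Finset.mem_erase.mp ht).1)]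
    rw [← Finset.sum_mul, Finset.sum_erase_eq_sub (mem_univ (1 : ZMod p)), sum_chi hp,
      chi_one, zero_sub]
    ring
  rw [hone, herase]; ring

lemma Dlem (hp : Odd p) :
    ∑ s : ZMod p, ∑ q : ZMod p, χ (s ^ 2 - 4 * q) * (χ q * (χ (s + 2) * χ (s + 2 * q)))
      = χ (-1) * ∑ v : ZMod p, χ v * χ (1 - v) * H₂ p v := by
  have h2 : (2 : ZMod p) ≠ 0 := two_ne hp
  have h4 : (4 : ZMod p) ≠ 0 := four_ne hp
  -- inner sum for each s equals χ (s+2) * (χ s * H₂ (-(s * 2⁻¹)))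
  have hinner : ∀ s : ZMod p,
      ∑ q : ZMod p, χ (s ^ 2 - 4 * q) * (χ q * (χ (s + 2) * χ (s + 2 * q)))
        = χ (s + 2) * (χ s * H₂ p (-(s * 2⁻¹))) := by
    intro s
    by_cases hs : s = 0
    · subst hs
      have key : ∀ q : ZMod p, χ ((0 : ZMod p) ^ 2 - 4 * q) * (χ q * (χ (0 + 2) * χ (0 + 2 * q)))
          = (χ (-4) * (χ 2 * χ 2)) * (χ q * χ q * χ q) := by
        intro q
        have e1 : (0 : ZMod p) ^ 2 - 4 * q = -4 * q := by ring
        have e2 : (0 : ZMod p) + 2 * q = 2 * q := by ring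
        have e3 : (0 : ZMod p) + 2 = 2 := by ring
        rw [e1, e2, e3, chi_mul, chi_mul]; ring
      have key2 : ∀ q : ZMod p, χ q * χ q * χ q = χ q := by
        intro q
        by_cases hq : q = 0
        · simp [hq, chi_zero]
        · rw [chi_sq hq, one_mul]
      rw [Finset.sum_congr rfl fun q _ => key q, ← Finset.mul_sum,
        Finset.sum_congr rfl fun q _ => key2 q, sum_chi hp, mul_zero, chi_zero]
      ring
    · -- pull out χ (s+2), reindex q = (s^2 * 4⁻¹) * z
      have he : s ^ 2 * 4⁻¹ ≠ 0 := mul_ne_zero (pow_ne_zero 2 hs) (inv_ne_zero h4)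
      have h1 := sum_affine he 0
        (fun q => χ (s ^ 2 - 4 * q) * (χ q * (χ (s + 2) * χ (s + 2 * q))))
      simp only [add_zero] at h1
      rw [← h1]
      have key : ∀ z : ZMod p,
          χ (s ^ 2 - 4 * (s ^ 2 * 4⁻¹ * z)) * (χ (s ^ 2 * 4⁻¹ * z)
            * (χ (s + 2) * χ (s + 2 * (s ^ 2 * 4⁻¹ * z))))
          = χ (s + 2) * (χ s * (χ z * χ (1 - z) * χ (1 - -(s * 2⁻¹) * z))) := by
        intro z
        have hss : χ (s * s) = 1 := chi_sq' hs
        have e1 : s ^ 2 - 4 * (s ^ 2 * 4⁻¹ * z) = (s * s) * (1 - z) := by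
          field_simp
        have h42 : (4 : ZMod p) = 2 * 2 := by norm_num
        have i2 : (2 : ZMod p) * 2⁻¹ = 1 := mul_inv_cancel₀ h2
        have e2 : s ^ 2 * 4⁻¹ * z = ((s * 2⁻¹) * (s * 2⁻¹)) * z := by
          rw [h42, mul_inv]; ring
        have e3 : s + 2 * (s ^ 2 * 4⁻¹ * z) = s * (1 - -(s * 2⁻¹) * z) := by
          rw [h42, mul_inv]
          linear_combination (s ^ 2 * z * 2⁻¹) * i2
        have hs2 : s * 2⁻¹ ≠ 0 := mul_ne_zero hs (inv_ne_zero h2)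
        rw [e1, e3, e2, chi_mul, chi_mul, chi_mul, chi_mul,
          chi_mul s (1 - -(s * 2⁻¹) * z)]
        linear_combination (χ s * (χ (s + 2) * χ z * χ (1 - z) * χ (1 - -(s * 2⁻¹) * z))
            * (χ (s * 2⁻¹) * χ (s * 2⁻¹))) * chi_sq hs
          + (χ s * (χ (s + 2) * χ z * χ (1 - z) * χ (1 - -(s * 2⁻¹) * z))) * chi_sq hs2
      rw [Finset.sum_congr rfl fun z _ => key z, ← Finset.mul_sum, ← Finset.mul_sum, H₂]
  rw [Finset.sum_congr rfl fun s _ => hinner s]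
  -- reindex s = -2 * v
  have h3 := sum_affine (a := (-2 : ZMod p)) (neg_ne_zero.mpr h2) 0
    (fun s => χ (s + 2) * (χ s * H₂ p (-(s * 2⁻¹))))
  simp only [add_zero] at h3
  rw [← h3, Finset.mul_sum]
  refine Finset.sum_congr rfl fun v _ => ?_
  have e1 : -(-2 * v * 2⁻¹) = v := by
    have i2 : (2 : ZMod p) * 2⁻¹ = 1 := mul_inv_cancel₀ h2
    linear_combination v * i2
  have e2 : -2 * v + 2 = -2 * (v - 1) := by ring
  rw [e1, e2, chi_mul, chi_mul]
  have e3 : χ (v - 1 : ZMod p) = χ (-1) * χ (1 - v) := by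
    have : (v - 1 : ZMod p) = -1 * (1 - v) := by ring
    rw [this, chi_mul]
  rw [e3]
  have hn2 : χ (-2 : ZMod p) * χ (-2 : ZMod p) = 1 := chi_sq (neg_ne_zero.mpr h2)
  linear_combination (χ (-1) * χ (1 - v) * χ v * H₂ p v) * hn2

lemma claim1 (hp : Odd p) {t : ZMod p} (ht0 : t ≠ 0) (ht1 : t ≠ -1) :
    ∑ w : ZMod p, χ w * (χ (w - 4 * t) * χ ((1 + t) ^ 2 - w))
      = χ (-1) * H₂ p (4 * t * ((1 + t) * (1 + t))⁻¹) := by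
  have h4 : (4 : ZMod p) ≠ 0 := four_ne hp
  have ha : (4 : ZMod p) * t ≠ 0 := mul_ne_zero h4 ht0
  have hu1 : (1 : ZMod p) + t ≠ 0 := by
    intro h; apply ht1; linear_combination h
  set d : ZMod p := (1 + t) * (1 + t) * (4 * t)⁻¹ with hd_def
  have hd : d ≠ 0 := mul_ne_zero (mul_ne_zero hu1 hu1) (inv_ne_zero ha)
  have h1 := sum_affine ha 0 (fun w => χ w * (χ (w - 4 * t) * χ ((1 + t) ^ 2 - w)))
  simp only [add_zero] at h1
  rw [← h1]
  have had : 4 * t * d = (1 + t) * (1 + t) := by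
    rw [hd_def, mul_comm ((1 + t) * (1 + t)) ((4 * t)⁻¹), ← mul_assoc,
      mul_inv_cancel₀ ha, one_mul]
  have key : ∀ z : ZMod p, χ (4 * t * z) * (χ (4 * t * z - 4 * t) * χ ((1 + t) ^ 2 - 4 * t * z))
      = χ (4 * t) * (χ z * χ (1 - z) * χ (z - d)) := by
    intro z
    have e1 : 4 * t * z - 4 * t = (4 * t) * (-1 * (1 - z)) := by ring
    have e2 : (1 + t) ^ 2 - 4 * t * z = (4 * t) * (-1 * (z - d)) := by
      have : (1 + t) ^ 2 = 4 * t * d := by rw [had]; ring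
      rw [this]; ring
    rw [e1, e2, chi_mul (4 * t) z, chi_mul (4 * t) (-1 * (1 - z)), chi_mul (-1) (1 - z),
      chi_mul (4 * t) (-1 * (z - d)), chi_mul (-1) (z - d)]
    linear_combination (χ (4 * t) * χ (4 * t) * χ (4 * t) * χ z * χ (1 - z) * χ (z - d))
        * chi_sq (a := (-1 : ZMod p)) (neg_ne_zero.mpr one_ne_zero)
      + (χ (4 * t) * χ z * χ (1 - z) * χ (z - d)) * chi_sq ha
  rw [Finset.sum_congr rfl fun z _ => key z, ← Finset.mul_sum, Kcub hd]
  have hdinv : d⁻¹ = 4 * t * ((1 + t) * (1 + t))⁻¹ := by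
    rw [hd_def, mul_inv, inv_inv]; ring
  have hnd : χ (-d) = χ (-1) * χ d := by
    rw [show (-d : ZMod p) = -1 * d by ring, chi_mul]
  have hchid : χ d = χ (4 * t) := by
    rw [hd_def, chi_mul, chi_sq' hu1, chi_inv, one_mul]
  rw [hdinv, hnd, hchid]
  linear_combination (χ (-1) * H₂ p (4 * t * ((1 + t) * (1 + t))⁻¹)) * chi_sq ha

lemma claim2 (hp : Odd p) :
    ∑ w : ZMod p, χ w * (χ (w - 4 * (-1 : ZMod p)) * χ ((1 + (-1 : ZMod p)) ^ 2 - w))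
      = -χ (-1) := by
  have h4 : χ (4 : ZMod p) = 1 := by
    rw [show (4 : ZMod p) = 2 * 2 by norm_num]; exact chi_sq' (two_ne hp)
  have key : ∀ w : ZMod p, χ w * (χ (w - 4 * (-1 : ZMod p)) * χ ((1 + (-1 : ZMod p)) ^ 2 - w))
      = χ (-1) * (χ (w + 4) - (if w = 0 then (1:ℂ) else 0)) := by
    intro w
    have e1 : (1 + (-1 : ZMod p)) ^ 2 - w = -1 * w := by ring
    have e2 : w - 4 * (-1 : ZMod p) = w + 4 := by ring
    rw [e1, e2, chi_mul]
    by_cases hw : w = 0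
    · rw [hw, if_pos rfl, chi_zero]
      simp only [zero_add, h4]
      ring
    · rw [if_neg hw, sub_zero]
      linear_combination (χ (-1) * χ (w + 4)) * chi_sq hw
  rw [Finset.sum_congr rfl fun w _ => key w, ← Finset.mul_sum, Finset.sum_sub_distrib,
    sum_chi_shift hp 4, Finset.sum_ite_eq' univ (0 : ZMod p) (fun _ => (1:ℂ))]
  simp

lemma B1lem (hp : Odd p) :
    ∑ t : ZMod p, χ t * (∑ w : ZMod p, χ w * (χ (w - 4 * t) * χ ((1 + t) ^ 2 - w)))
      = χ (-1) * ∑ v : ZMod p, χ v * χ (1 - v) * H₂ p v := by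
  have h2 : (2 : ZMod p) ≠ 0 := two_ne hp
  have hm1 : (-1 : ZMod p) ≠ 0 := neg_ne_zero.mpr one_ne_zero
  rw [← Finset.add_sum_erase univ _ (mem_univ (-1 : ZMod p))]
  have hneg : χ (-1 : ZMod p) * (∑ w : ZMod p, χ w * (χ (w - 4 * (-1 : ZMod p))
      * χ ((1 + (-1 : ZMod p)) ^ 2 - w))) = -1 := by
    rw [claim2 hp]
    linear_combination (-1 : ℂ) * chi_sq hm1
  have herase : ∑ t ∈ univ.erase (-1 : ZMod p),
      χ t * (∑ w : ZMod p, χ w * (χ (w - 4 * t) * χ ((1 + t) ^ 2 - w)))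
      = χ (-1) * (χ (-1) + ∑ v : ZMod p, χ v * χ (1 - v) * H₂ p v) := by
    have step1 : ∀ t ∈ univ.erase (-1 : ZMod p),
        χ t * (∑ w : ZMod p, χ w * (χ (w - 4 * t) * χ ((1 + t) ^ 2 - w)))
        = χ (-1) * (χ t * H₂ p (4 * t * ((1 + t) * (1 + t))⁻¹)) := by
      intro t ht
      have ht1 : t ≠ -1 := (Finset.mem_erase.mp ht).1
      by_cases ht0 : t = 0
      · rw [ht0, chi_zero]; ring
      · rw [claim1 hp ht0 ht1]; ring
    rw [Finset.sum_congr rfl step1, ← Finset.mul_sum]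
    congr 1
    rw [← Finset.filter_ne']
    -- involution t ↦ (1 - t) * (1 + t)⁻¹
    have hinv : ∀ t : ZMod p, t ≠ -1 →
        (1 - (1 - t) * (1 + t)⁻¹) * (1 + (1 - t) * (1 + t)⁻¹)⁻¹ = t := by
      intro t ht1
      have hu : (1 : ZMod p) + t ≠ 0 := by intro h; apply ht1; linear_combination h
      have iu : (1 + t)⁻¹ * (1 + t) = 1 := inv_mul_cancel₀ hu
      have i2 : (2 : ZMod p) * 2⁻¹ = 1 := mul_inv_cancel₀ h2
      have hit : 1 + (1 - t) * (1 + t)⁻¹ = 2 * (1 + t)⁻¹ := by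
        linear_combination (-1 : ZMod p) * iu
      have h1t : 1 - (1 - t) * (1 + t)⁻¹ = 2 * t * (1 + t)⁻¹ := by
        linear_combination (-1 : ZMod p) * iu
      rw [hit, h1t, mul_inv, inv_inv]
      field_simp
    have hmem : ∀ t : ZMod p, t ≠ -1 → (1 - t) * (1 + t)⁻¹ ≠ -1 := by
      intro t ht1 h
      have hu : (1 : ZMod p) + t ≠ 0 := by intro h'; apply ht1; linear_combination h'
      have := congrArg (· * (1 + t)) h
      rw [mul_assoc, inv_mul_cancel₀ hu, mul_one] at this
      exact h2 (by linear_combination this)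
    rw [Finset.sum_nbij' (i := fun t => (1 - t) * (1 + t)⁻¹)
      (j := fun t => (1 - t) * (1 + t)⁻¹)
      (fun t ht => Finset.mem_filter.mpr ⟨mem_univ _, hmem t (Finset.mem_filter.mp ht).2⟩)
      (fun t ht => Finset.mem_filter.mpr ⟨mem_univ _, hmem t (Finset.mem_filter.mp ht).2⟩)
      (fun t ht => hinv t (Finset.mem_filter.mp ht).2)
      (fun t ht => hinv t (Finset.mem_filter.mp ht).2)
      (g := fun r => χ (1 - r * r) * H₂ p (1 - r * r))
      ?_]
    swap
    · intro t ht
      have ht1 : t ≠ -1 := (Finset.mem_filter.mp ht).2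
      have hu : (1 : ZMod p) + t ≠ 0 := by intro h'; apply ht1; linear_combination h'
      have iu : (1 + t)⁻¹ * (1 + t) = 1 := inv_mul_cancel₀ hu
      have e1 : 1 - ((1 - t) * (1 + t)⁻¹) * ((1 - t) * (1 + t)⁻¹)
          = 4 * t * ((1 + t) * (1 + t))⁻¹ := by
        field_simp
        ring
      have e2 : 4 * t * ((1 + t) * (1 + t))⁻¹ = t * ((2 * (1 + t)⁻¹) * (2 * (1 + t)⁻¹)) := by
        rw [mul_inv, show (4 : ZMod p) = 2 * 2 by norm_num]; ring
      have hc : (2 : ZMod p) * (1 + t)⁻¹ ≠ 0 := mul_ne_zero h2 (inv_ne_zero hu)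
      show χ t * H₂ p (4 * t * ((1 + t) * (1 + t))⁻¹)
        = χ (1 - ((1 - t) * (1 + t)⁻¹) * ((1 - t) * (1 + t)⁻¹))
          * H₂ p (1 - ((1 - t) * (1 + t)⁻¹) * ((1 - t) * (1 + t)⁻¹))
      rw [e1, e2, chi_mul, chi_sq' hc, mul_one]
    -- extend the filtered sum over r to all of ZMod p
    rw [Finset.sum_filter_of_ne (by
      intro r _ hne
      rintro rfl
      apply hne
      rw [show (1 : ZMod p) - (-1) * (-1) = 0 by ring, chi_zero, zero_mul])]
    -- now compute ∑ r, χ (1 - r*r) * H₂ (1 - r*r)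
    have hsq : ∀ r : ZMod p, χ (1 - r * r) * H₂ p (1 - r * r)
        = (fun w => χ (1 - w) * H₂ p (1 - w)) (r ^ 2) := by
      intro r; simp only [pow_two]
    rw [Finset.sum_congr rfl fun r _ => hsq r,
      sum_sq_count hp (fun w => χ (1 - w) * H₂ p (1 - w))]
    have hsplit : ∀ w : ZMod p, (1 + χ w) * (χ (1 - w) * H₂ p (1 - w))
        = χ (1 - w) * H₂ p (1 - w) + χ w * (χ (1 - w) * H₂ p (1 - w)) := by
      intro w; ring
    rw [Finset.sum_congr rfl fun w _ => hsplit w, Finset.sum_add_distrib]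
    have hre := sum_affine (a := (-1 : ZMod p)) hm1 1
    have h1 : ∑ w : ZMod p, χ (1 - w) * H₂ p (1 - w) = ∑ v : ZMod p, χ v * H₂ p v := by
      rw [← hre (fun w => χ (1 - w) * H₂ p (1 - w))]
      refine Finset.sum_congr rfl fun v _ => ?_
      rw [show (1 : ZMod p) - (-1 * v + 1) = v by ring]
    have h2' : ∑ w : ZMod p, χ w * (χ (1 - w) * H₂ p (1 - w))
        = ∑ v : ZMod p, χ v * χ (1 - v) * H₂ p v := by
      rw [← hre (fun w => χ w * (χ (1 - w) * H₂ p (1 - w)))]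
      refine Finset.sum_congr rfl fun v _ => ?_
      rw [show (1 : ZMod p) - (-1 * v + 1) = v by ring,
        show (-1 : ZMod p) * v + 1 = 1 - v by ring]
      ring
    rw [h1, h2', C1 hp]
  rw [hneg, herase]
  linear_combination chi_sq hm1

lemma F1_expand (hp : Odd p) : Fsum p 1
    = ∑ x : ZMod p, ∑ y : ZMod p, χ (x * y) * (χ (x + y + 2) * χ (x + y + 2 * (x * y))) := by
  rw [Fsum]
  have hterm : ∀ x y : ZMod p, x ≠ 0 → y ≠ 0 →
      χ (x + y + 1 + 1) * χ (x⁻¹ + y⁻¹ + 1⁻¹ + 1)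
      = χ (x * y) * (χ (x + y + 2) * χ (x + y + 2 * (x * y))) := by
    intro x y hx hy
    have e1 : x + y + 1 + 1 = x + y + 2 := by ring
    have e2 : x⁻¹ + y⁻¹ + 1⁻¹ + 1 = (x + y + 2 * (x * y)) * (x * y)⁻¹ := by
      rw [inv_one, mul_inv]
      field_simp
      ring
    rw [e1, e2, chi_mul, chi_inv]
    ring
  calc ∑ x ∈ univ.filter (fun x : ZMod p => x ≠ 0),
        ∑ y ∈ univ.filter (fun y : ZMod p => y ≠ 0),
          χ (x + y + 1 + 1) * χ (x⁻¹ + y⁻¹ + 1⁻¹ + 1)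
      = ∑ x ∈ univ.filter (fun x : ZMod p => x ≠ 0),
        ∑ y ∈ univ.filter (fun y : ZMod p => y ≠ 0),
          χ (x * y) * (χ (x + y + 2) * χ (x + y + 2 * (x * y))) := by
        refine Finset.sum_congr rfl fun x hx => Finset.sum_congr rfl fun y hy => ?_
        exact hterm x y (Finset.mem_filter.mp hx).2 (Finset.mem_filter.mp hy).2
  _ = ∑ x ∈ univ.filter (fun x : ZMod p => x ≠ 0), ∑ y : ZMod p,
          χ (x * y) * (χ (x + y + 2) * χ (x + y + 2 * (x * y))) := by
        refine Finset.sum_congr rfl fun x _ => ?_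
        refine Finset.sum_subset (Finset.filter_subset _ _) fun y _ hy => ?_
        have : y = 0 := by
          by_contra h
          exact hy (Finset.mem_filter.mpr ⟨mem_univ _, h⟩)
        rw [this, mul_zero, chi_zero, zero_mul]
  _ = ∑ x : ZMod p, ∑ y : ZMod p,
          χ (x * y) * (χ (x + y + 2) * χ (x + y + 2 * (x * y))) := by
        refine Finset.sum_subset (Finset.filter_subset _ _) fun x _ hx => ?_
        have : x = 0 := by
          by_contra h
          exact hx (Finset.mem_filter.mpr ⟨mem_univ _, h⟩)
        rw [this]
        refine Finset.sum_eq_zero fun y _ => ?_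
        rw [zero_mul, chi_zero, zero_mul]

lemma F1_eval (hp : Odd p) :
    Fsum p 1 = (p : ℂ) + χ (-1) * ∑ v : ZMod p, χ v * χ (1 - v) * H₂ p v := by
  have h := sum_pair hp (fun s q => χ q * (χ (s + 2) * χ (s + 2 * q)))
  rw [F1_expand hp, h]
  have hsplit : ∀ s q : ZMod p,
      (1 + χ (s ^ 2 - 4 * q)) * (χ q * (χ (s + 2) * χ (s + 2 * q)))
      = χ q * (χ (s + 2) * χ (s + 2 * q))
        + χ (s ^ 2 - 4 * q) * (χ q * (χ (s + 2) * χ (s + 2 * q))) := by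
    intro s q; ring
  rw [Finset.sum_congr rfl fun s _ => Finset.sum_congr rfl fun q _ => hsplit s q]
  rw [Finset.sum_congr rfl fun s (_ : s ∈ univ) => Finset.sum_add_distrib,
    Finset.sum_add_distrib, Aprime hp, Dlem hp]

lemma H2sq_eval (hp : Odd p) :
    H₂ p (-1) ^ 2 = (p : ℂ) + (p : ℂ) * χ (-1)
      + χ (-1) * ∑ v : ZMod p, χ v * χ (1 - v) * H₂ p v := by
  have hH : H₂ p (-1) = ∑ u : ZMod p, χ u * χ (1 - u) * χ (1 + u) := by
    rw [H₂]
    refine Finset.sum_congr rfl fun u _ => ?_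
    rw [show (1 : ZMod p) - (-1) * u = 1 + u by ring]
  rw [hH, sq, Finset.sum_mul_sum]
  have hmerge : ∀ u v : ZMod p,
      (χ u * χ (1 - u) * χ (1 + u)) * (χ v * χ (1 - v) * χ (1 + v))
      = χ (u * v) * (χ (1 - (u + v) + u * v) * χ (1 + (u + v) + u * v)) := by
    intro u v
    rw [show (1 : ZMod p) - (u + v) + u * v = (1 - u) * (1 - v) by ring,
      show (1 : ZMod p) + (u + v) + u * v = (1 + u) * (1 + v) by ring,
      chi_mul u v, chi_mul (1 - u) (1 - v), chi_mul (1 + u) (1 + v)]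
    ring
  rw [Finset.sum_congr rfl fun u _ => Finset.sum_congr rfl fun v _ => hmerge u v]
  have h := sum_pair hp (fun s t => χ t * (χ (1 - s + t) * χ (1 + s + t)))
  rw [h]
  have hsplit : ∀ s t : ZMod p,
      (1 + χ (s ^ 2 - 4 * t)) * (χ t * (χ (1 - s + t) * χ (1 + s + t)))
      = χ t * (χ (1 - s + t) * χ (1 + s + t))
        + χ (s ^ 2 - 4 * t) * (χ t * (χ (1 - s + t) * χ (1 + s + t))) := by
    intro s t; ring
  rw [Finset.sum_congr rfl fun s _ => Finset.sum_congr rfl fun t _ => hsplit s t,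
    Finset.sum_congr rfl fun s (_ : s ∈ univ) => Finset.sum_add_distrib,
    Finset.sum_add_distrib, Alem hp]
  -- remaining: B term
  have hB : ∑ s : ZMod p, ∑ t : ZMod p,
      χ (s ^ 2 - 4 * t) * (χ t * (χ (1 - s + t) * χ (1 + s + t)))
      = (p : ℂ) * χ (-1) + χ (-1) * ∑ v : ZMod p, χ v * χ (1 - v) * H₂ p v := by
    rw [Finset.sum_comm]
    have hinner : ∀ t : ZMod p,
        ∑ s : ZMod p, χ (s ^ 2 - 4 * t) * (χ t * (χ (1 - s + t) * χ (1 + s + t)))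
        = χ t * (∑ w : ZMod p, χ (w - 4 * t) * χ ((1 + t) ^ 2 - w))
          + χ t * (∑ w : ZMod p, χ w * (χ (w - 4 * t) * χ ((1 + t) ^ 2 - w))) := by
      intro t
      have key : ∀ s : ZMod p,
          χ (s ^ 2 - 4 * t) * (χ t * (χ (1 - s + t) * χ (1 + s + t)))
          = χ t * ((fun w => χ (w - 4 * t) * χ ((1 + t) ^ 2 - w)) (s ^ 2)) := by
        intro s
        simp only
        rw [show (1 + t : ZMod p) ^ 2 - s ^ 2 = (1 - s + t) * (1 + s + t) by ring,
          chi_mul (1 - s + t) (1 + s + t),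
          show (s ^ 2 - 4 * t : ZMod p) = s ^ 2 - 4 * t by ring]
        ring
      rw [Finset.sum_congr rfl fun s _ => key s, ← Finset.mul_sum,
        sum_sq_count hp (fun w => χ (w - 4 * t) * χ ((1 + t) ^ 2 - w))]
      have hsplit2 : ∀ w : ZMod p,
          (1 + χ w) * (χ (w - 4 * t) * χ ((1 + t) ^ 2 - w))
          = χ (w - 4 * t) * χ ((1 + t) ^ 2 - w)
            + χ w * (χ (w - 4 * t) * χ ((1 + t) ^ 2 - w)) := by
        intro w; ring
      rw [Finset.sum_congr rfl fun w _ => hsplit2 w, Finset.sum_add_distrib, mul_add]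
    rw [Finset.sum_congr rfl fun t _ => hinner t, Finset.sum_add_distrib,
      B2lem hp, B1lem hp]
  rw [hB]
  ring

lemma Fneg1_eval (hp : Odd p) : Fsum p (-1) = -χ (-1) * ((p : ℂ) - 1) := by
  rw [Fsum]
  have hterm : ∀ x y : ZMod p, x ≠ 0 → y ≠ 0 →
      χ (x + y + (-1) + 1) * χ (x⁻¹ + y⁻¹ + (-1 : ZMod p)⁻¹ + 1)
      = (χ (x + y) * χ (x + y)) * (χ x * χ y) := by
    intro x y hx hy
    have e1 : x + y + (-1) + 1 = x + y := by ring
    have e2 : x⁻¹ + y⁻¹ + (-1 : ZMod p)⁻¹ + 1 = (x + y) * (x * y)⁻¹ := by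
      rw [inv_neg, inv_one, mul_inv]
      field_simp
      ring
    rw [e1, e2, chi_mul, chi_inv, chi_mul]
    ring
  have hext : ∑ x ∈ univ.filter (fun x : ZMod p => x ≠ 0),
      ∑ y ∈ univ.filter (fun y : ZMod p => y ≠ 0),
        χ (x + y + (-1) + 1) * χ (x⁻¹ + y⁻¹ + (-1 : ZMod p)⁻¹ + 1)
      = ∑ x : ZMod p, ∑ y : ZMod p, (χ (x + y) * χ (x + y)) * (χ x * χ y) := by
    calc ∑ x ∈ univ.filter (fun x : ZMod p => x ≠ 0),
        ∑ y ∈ univ.filter (fun y : ZMod p => y ≠ 0),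
          χ (x + y + (-1) + 1) * χ (x⁻¹ + y⁻¹ + (-1 : ZMod p)⁻¹ + 1)
        = ∑ x ∈ univ.filter (fun x : ZMod p => x ≠ 0),
          ∑ y ∈ univ.filter (fun y : ZMod p => y ≠ 0),
            (χ (x + y) * χ (x + y)) * (χ x * χ y) := by
          refine Finset.sum_congr rfl fun x hx => Finset.sum_congr rfl fun y hy => ?_
          exact hterm x y (Finset.mem_filter.mp hx).2 (Finset.mem_filter.mp hy).2
    _ = ∑ x ∈ univ.filter (fun x : ZMod p => x ≠ 0), ∑ y : ZMod p,
            (χ (x + y) * χ (x + y)) * (χ x * χ y) := by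
          refine Finset.sum_congr rfl fun x _ => ?_
          refine Finset.sum_subset (Finset.filter_subset _ _) fun y _ hy => ?_
          have : y = 0 := by
            by_contra h
            exact hy (Finset.mem_filter.mpr ⟨mem_univ _, h⟩)
          rw [this, chi_zero, mul_zero, mul_zero]
    _ = ∑ x : ZMod p, ∑ y : ZMod p, (χ (x + y) * χ (x + y)) * (χ x * χ y) := by
          refine Finset.sum_subset (Finset.filter_subset _ _) fun x _ hx => ?_
          have : x = 0 := by
            by_contra h
            exact hx (Finset.mem_filter.mpr ⟨mem_univ _, h⟩)
          rw [this]
          refine Finset.sum_eq_zero fun y _ => ?_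
          rw [chi_zero, zero_mul, mul_zero]
  rw [hext]
  have hinner : ∀ x : ZMod p,
      ∑ y : ZMod p, (χ (x + y) * χ (x + y)) * (χ x * χ y)
      = -χ (-1) * (χ x * χ x) := by
    intro x
    have key : ∀ y : ZMod p, (χ (x + y) * χ (x + y)) * (χ x * χ y)
        = χ x * χ y - (if y = -x then χ x * χ y else 0) := by
      intro y
      by_cases hy : y = -x
      · rw [if_pos hy, hy, show x + -x = (0 : ZMod p) by ring, chi_zero]
        ring
      · rw [if_neg hy, sub_zero]
        have hxy : x + y ≠ 0 := by
          intro h; apply hy; linear_combination h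
        linear_combination (χ x * χ y) * chi_sq hxy
    rw [Finset.sum_congr rfl fun y _ => key y, Finset.sum_sub_distrib,
      Finset.sum_ite_eq' univ (-x : ZMod p) (fun y => χ x * χ y)]
    simp only [mem_univ, if_true]
    rw [← Finset.mul_sum, sum_chi hp, mul_zero, zero_sub,
      show (-x : ZMod p) = -1 * x by ring, chi_mul]
    ring
  rw [Finset.sum_congr rfl fun x _ => hinner x, ← Finset.mul_sum, sum_chi_sq]

end DGPaux

/-- **Lemma (DGP, Lemma 3.3).** `F(1) = H₂(-1)² - p φ(-1)` and
`F(-1) = φ(-1) H₂(1)² - p φ(-1)`. -/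
theorem F_at_one_and_neg_one (p : ℕ) [Fact p.Prime] (hp : Odd p) :
    Fsum p 1 = (H₂ p (-1)) ^ 2 - p * Φ p (-1) ∧
    Fsum p (-1) = Φ p (-1) * (H₂ p 1) ^ 2 - p * Φ p (-1) := by
  constructor
  · rw [DGPaux.F1_eval hp, DGPaux.H2sq_eval hp]
    ring
  · rw [DGPaux.Fneg1_eval hp, DGPaux.H2_one hp]
    ring
end

section
/- Let p be an odd prime. Then the quadratic-twisted second Kloosterman moment satisfies Σ_{a ∈ 𝔽_p^×} φ(a)·K(a)² = −p. -/
open Finset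

/-- **Second twisted Kloosterman moment.** `S(2,φ) = Σ_{a≠0} φ(a) K(a)² = -p`. -/
theorem twisted_second_moment (p : ℕ) [Fact p.Prime] (hp : Odd p) :
    ∑ a ∈ univ.filter (fun a : ZMod p => a ≠ 0), Φ p a * K p a ^ 2 = -(p : ℂ) := by
  have hp' : p.Prime := Fact.out
  haveI : NeZero p := ⟨hp'.ne_zero⟩
  have hp2 : ringChar (ZMod p) ≠ 2 := by
    rw [ZMod.ringChar_zmod_n]
    rintro rfl
    exact absurd (Nat.odd_iff.mp hp) (by norm_num)
  have hΦ1 : Φ p ≠ 1 :=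
    (MulChar.ringHomComp_ne_one_iff Int.cast_injective).mpr (quadraticChar_ne_one hp2)
  have hΦq : (Φ p).IsQuadratic := (quadraticChar_isQuadratic (ZMod p)).comp _
  have Φ0 : Φ p 0 = 0 := by
    simp [Φ]
  -- the additive character
  have hprim : IsPrimitiveRoot (Complex.exp (2 * Real.pi * Complex.I / p)) p :=
    Complex.isPrimitiveRoot_exp p hp'.ne_zero
  have hζp : Complex.exp (2 * Real.pi * Complex.I / p) ^ p = 1 := hprim.pow_eq_one
  set ψ : AddChar (ZMod p) ℂ := AddChar.zmodChar p hζp with hψdef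
  have hψprim : ψ.IsPrimitive := AddChar.zmodChar_primitive_of_primitive_root p hprim
  have hθψ : ∀ x : ZMod p, θ p x = ψ x := by
    intro x
    rw [hψdef, AddChar.zmodChar_apply, θ, ← Complex.exp_nat_mul]
    congr 1
    ring
  -- basic character facts
  have hΦsq : ∀ {t : ZMod p}, t ≠ 0 → Φ p t * Φ p t = 1 := by
    intro t ht
    have h1 : Φ p t * Φ p t⁻¹ = 1 := by
      rw [← map_mul, mul_inv_cancel₀ ht, map_one]
    rcases hΦq t with h | h | h
    · rw [h, zero_mul] at h1; exact absurd h1 zero_ne_one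
    · rw [h, mul_one]
    · rw [h]; norm_num
  have hΦinv : ∀ {t : ZMod p}, t ≠ 0 → Φ p t⁻¹ = Φ p t := by
    intro t ht
    have h1 : Φ p t * Φ p t⁻¹ = 1 := by
      rw [← map_mul, mul_inv_cancel₀ ht, map_one]
    calc Φ p t⁻¹ = (Φ p t * Φ p t) * Φ p t⁻¹ := by rw [hΦsq ht, one_mul]
    _ = Φ p t * (Φ p t * Φ p t⁻¹) := by ring
    _ = Φ p t := by rw [h1, mul_one]
  set g := gaussSum (Φ p) ψ with hg
  -- Lemma A
  have lemA : ∀ t : ZMod p, ∑ a : ZMod p, Φ p a * ψ (a * t) = Φ p t * g := by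
    intro t
    rcases eq_or_ne t 0 with rfl | ht
    · simp only [mul_zero, AddChar.map_zero_eq_one, mul_one, Φ0, zero_mul]
      exact MulChar.sum_eq_zero_of_ne_one hΦ1
    · have hu := gaussSum_mulShift (Φ p) ψ (Units.mk0 t ht)
      have he : gaussSum (Φ p) (AddChar.mulShift ψ (Units.mk0 t ht))
          = ∑ a : ZMod p, Φ p a * ψ (a * t) := by
        simp only [gaussSum, AddChar.mulShift_apply, Units.val_mk0]
        exact sum_congr rfl fun a _ => by rw [mul_comm t a]
      rw [he, Units.val_mk0] at hu
      rw [hg, ← hu, ← mul_assoc, hΦsq ht, one_mul]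
  -- Lemma C (Jacobi sum evaluation)
  have lemC : ∀ {s : ZMod p}, s ≠ 0 → ∑ x : ZMod p, Φ p x * Φ p (s - x) = -Φ p (-1) := by
    intro s hs
    have h1 : ∑ x : ZMod p, Φ p x * Φ p (s - x)
        = ∑ u : ZMod p, Φ p (s * u) * Φ p (s * (1 - u)) := by
      refine (Fintype.sum_equiv (Equiv.mulLeft₀ s hs) _ _ fun u => ?_).symm
      simp only [Equiv.mulLeft₀_apply]
      congr 1
      congr 1
      ring
    have h2 : ∀ u : ZMod p, Φ p (s * u) * Φ p (s * (1 - u)) = Φ p u * Φ p (1 - u) := by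
      intro u
      rw [map_mul, map_mul, mul_mul_mul_comm, hΦsq hs, one_mul]
    rw [h1]
    simp_rw [h2]
    have hJ : jacobiSum (Φ p) (Φ p) = -Φ p (-1) := by
      have h := jacobiSum_nontrivial_inv hΦ1
      rwa [hΦq.inv] at h
    exact hJ
  -- expand the square
  have expand : ∀ a : ZMod p, K p a ^ 2 =
      ∑ x ∈ univ.filter (fun x : ZMod p => x ≠ 0),
        ∑ y ∈ univ.filter (fun y : ZMod p => y ≠ 0),
          ψ (x + y) * ψ (a * (x⁻¹ + y⁻¹)) := by
    intro a
    have : K p a = ∑ x ∈ univ.filter (fun x : ZMod p => x ≠ 0), ψ (x + a * x⁻¹) :=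
      sum_congr rfl fun x _ => hθψ _
    rw [sq, this, sum_mul_sum]
    refine sum_congr rfl fun x _ => sum_congr rfl fun y _ => ?_
    rw [← AddChar.map_add_eq_mul, ← AddChar.map_add_eq_mul]
    congr 1
    ring
  -- put everything together
  calc
    ∑ a ∈ univ.filter (fun a : ZMod p => a ≠ 0), Φ p a * K p a ^ 2
        = ∑ a : ZMod p, Φ p a * K p a ^ 2 := by
          rw [sum_filter]
          refine sum_congr rfl fun a _ => ?_
          split_ifs with h
          · rfl
          · rw [not_not] at h
            rw [h, Φ0, zero_mul]
    _ = ∑ x ∈ univ.filter (fun x : ZMod p => x ≠ 0),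
          ∑ y ∈ univ.filter (fun y : ZMod p => y ≠ 0),
            ψ (x + y) * (Φ p (x⁻¹ + y⁻¹) * g) := by
          simp_rw [expand, mul_sum]
          rw [sum_comm]
          refine sum_congr rfl fun x _ => ?_
          rw [sum_comm]
          refine sum_congr rfl fun y _ => ?_
          rw [← lemA (x⁻¹ + y⁻¹), mul_sum]
          exact sum_congr rfl fun a _ => by ring
    _ = ∑ x ∈ univ.filter (fun x : ZMod p => x ≠ 0),
          ∑ s : ZMod p, ψ s * Φ p s * Φ p x * Φ p (s - x) * g := by
          refine sum_congr rfl fun x hx => ?_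
          rw [mem_filter] at hx
          have hx0 : x ≠ 0 := hx.2
          have hB : ∀ y : ZMod p, y ≠ 0 →
              ψ (x + y) * (Φ p (x⁻¹ + y⁻¹) * g)
                = ψ (x + y) * Φ p (x + y) * Φ p x * Φ p y * g := by
            intro y hy
            have hxy : x⁻¹ + y⁻¹ = (x + y) * (x⁻¹ * y⁻¹) := by
              field_simp
              ring
            rw [hxy, map_mul, map_mul, hΦinv hx0, hΦinv hy]
            ring
          rw [sum_congr rfl fun y hy => hB y (mem_filter.mp hy).2]
          rw [sum_filter_of_ne (fun y _ hne => by
            intro hy0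
            apply hne
            rw [hy0, Φ0, mul_zero, zero_mul])]
          refine Fintype.sum_equiv (Equiv.addLeft x) _ _ fun y => ?_
          simp only [Equiv.coe_addLeft]
          rw [add_sub_cancel_left]
    _ = ∑ s : ZMod p, ψ s * Φ p s * (∑ x : ZMod p, Φ p x * Φ p (s - x)) * g := by
          rw [sum_comm]
          refine sum_congr rfl fun s _ => ?_
          rw [sum_filter_of_ne (fun x _ hne => by
            intro hx0
            apply hne
            rw [hx0, Φ0, mul_zero, zero_mul, zero_mul])]
          rw [mul_sum, sum_mul]
          exact sum_congr rfl fun x _ => by ring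
    _ = ∑ s : ZMod p, ψ s * Φ p s * (-Φ p (-1)) * g := by
          refine sum_congr rfl fun s _ => ?_
          rcases eq_or_ne s 0 with rfl | hs
          · rw [Φ0]; ring
          · rw [lemC hs]
    _ = -Φ p (-1) * (g * g) := by
          have h1 : ∑ s : ZMod p, ψ s * Φ p s * (-Φ p (-1)) * g
              = -Φ p (-1) * g * ∑ s : ZMod p, Φ p s * ψ s := by
            rw [mul_sum]
            exact sum_congr rfl fun s _ => by ring
          rw [h1, hg, gaussSum]
          ring
    _ = -(p : ℂ) := by
          rw [← sq, gaussSum_sq hΦ1 hΦq hψprim, ZMod.card]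
          have h := hΦsq (t := -1) (by
            intro h
            exact one_ne_zero (by rw [← neg_neg (1 : ZMod p), h, neg_zero]))
          calc -Φ p (-1) * (Φ p (-1) * (p : ℂ)) = -((Φ p (-1) * Φ p (-1)) * p) := by ring
          _ = -(p : ℂ) := by rw [h, one_mul]
end

section
/- Let p be an odd prime. Then Σ_{t ∈ 𝔽_p} φ(1+t) · Σ_{χ} (φχ choose χ)³ · χ̄(1−t²) = (φ(−2)/(p⁴·g(φ))) · Σ_{χ} g(φχ)²·g(χ̄)⁴·g(φχ²)·χ̄(4) − (p−1)·φ(−2)/p³, where both sums over χ run over all complex-valued multiplicative characters of 𝔽_p^× and χ̄ denotes the inverse character of χ. -/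
open Finset

/-- The Gauss sum `g(χ) = Σ_x χ(x) θ(x)`. -/
noncomputable def gs (p : ℕ) [Fact p.Prime] (χ : MulChar (ZMod p) ℂ) : ℂ :=
  ∑ x : ZMod p, χ x * θ p x

noncomputable instance (p : ℕ) [Fact p.Prime] : Fintype (MulChar (ZMod p) ℂ) :=
  Fintype.ofFinite _

/-- The Jacobi sum `J(A,B) = Σ_x A(x) B(1-x)`. -/
noncomputable def J (p : ℕ) [Fact p.Prime] (A B : MulChar (ZMod p) ℂ) : ℂ :=
  ∑ x : ZMod p, A x * B (1 - x)

/-- The binomial `(A choose B) = B(-1) J(A, B̄) / p`. -/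
noncomputable def binom (p : ℕ) [Fact p.Prime] (A B : MulChar (ZMod p) ℂ) : ℂ :=
  B (-1) / p * J p A B⁻¹

/-! ### Auxiliary algebraic identities -/

private theorem alg_gen (q f a b d j1 j2 a' d' ε δ Φ2 B4 : ℂ)
    (hq : q ≠ 0) (hf : f ≠ 0) (ha : a ≠ 0) (hd : d ≠ 0)
    (hε : ε * ε = 1) (hδ : δ * δ = 1) (hff : f * f = δ * q)
    (hj1 : j1 = a * b / f) (hj2 : j2 = a' * b / d')
    (haa' : a * a' = δ * ε * q) (hdd' : d * d' = δ * q) :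
    (ε / q * j1) ^ 3 * (Φ2 * B4 * j2) = δ * Φ2 / (q ^ 4 * f) * (a ^ 2 * b ^ 4 * d * B4) := by
  subst hj1 hj2
  have ha' : a' = δ * ε * q / a := by rw [eq_div_iff ha]; linear_combination haa'
  have hd'2 : d' = δ * q / d := by rw [eq_div_iff hd]; linear_combination hdd'
  subst ha' hd'2
  rcases mul_self_eq_one_iff.mp hε with rfl | rfl <;>
    rcases mul_self_eq_one_iff.mp hδ with rfl | rfl
  · have hqf : q = f * f := by linear_combination -hff
    subst hqf; field_simp
  · have hqf : q = -(f * f) := by linear_combination hff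
    subst hqf; field_simp
  · have hqf : q = f * f := by linear_combination -hff
    subst hqf; field_simp
  · have hqf : q = -(f * f) := by linear_combination hff
    subst hqf; field_simp

private theorem alg_quartic (q f b ε Φ2 B4 : ℂ) (hq : q ≠ 0) (hf : f ≠ 0)
    (hε : ε * ε = 1) (hff : f * f = q) :
    (ε / q * (b * b / f)) ^ 3 * (Φ2 * B4 * (-ε)) =
      Φ2 / (q ^ 4 * f) * (b ^ 2 * b ^ 4 * (-1) * B4) := by
  rcases mul_self_eq_one_iff.mp hε with rfl | rfl <;>
  · subst hff; field_simp

private theorem alg_one (q f δ Φ2 : ℂ) (hq : q ≠ 0) (hf : f ≠ 0)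
    (hδ : δ * δ = 1) (hff : f * f = δ * q) :
    ((1:ℂ) / q * (-1)) ^ 3 * (Φ2 * 1 * (-1)) = δ * Φ2 / (q ^ 4 * f) * (f ^ 2 * 1 * f * 1) := by
  rcases mul_self_eq_one_iff.mp hδ with rfl | rfl
  · have hqf : q = f * f := by linear_combination -hff
    subst hqf; field_simp
  · have hqf : q = -(f * f) := by linear_combination hff
    subst hqf; field_simp

private theorem alg_phi (q f δ Φ2 : ℂ) (hq : q ≠ 0) (hf : f ≠ 0)
    (hδ : δ * δ = 1) (hff : f * f = δ * q) :
    (δ / q * (-1)) ^ 3 * (Φ2 * 1 * (-1)) =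
      δ * Φ2 / (q ^ 4 * f) * ((-1) ^ 2 * f ^ 4 * f * 1) - (q - 1) * (δ * Φ2) / q ^ 3 := by
  rcases mul_self_eq_one_iff.mp hδ with rfl | rfl
  · have hqf : q = f * f := by linear_combination -hff
    subst hqf; field_simp; ring
  · have hqf : q = -(f * f) := by linear_combination hff
    subst hqf; field_simp; ring

/-! ### The inner sum over `t` -/

private theorem innerSumAux (p : ℕ) [Fact p.Prime] (h2 : (2 : ZMod p) ≠ 0)
    (χ : MulChar (ZMod p) ℂ) :
    ∑ t : ZMod p, Φ p (1 + t) * χ⁻¹ (1 - t ^ 2) =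
      Φ p 2 * χ⁻¹ 4 * jacobiSum (Φ p * χ⁻¹) χ⁻¹ := by
  have key := Equiv.sum_comp ((Equiv.mulLeft₀ (2:ZMod p) h2).trans (Equiv.subRight (1:ZMod p)))
      (fun t => Φ p (1 + t) * χ⁻¹ (1 - t ^ 2))
  rw [← key]
  have step : ∀ u : ZMod p,
      (fun t => Φ p (1 + t) * χ⁻¹ (1 - t ^ 2))
        (((Equiv.mulLeft₀ (2:ZMod p) h2).trans (Equiv.subRight (1:ZMod p))) u)
      = Φ p 2 * χ⁻¹ 4 * ((Φ p * χ⁻¹) u * χ⁻¹ (1 - u)) := by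
    intro u
    simp only [Equiv.trans_apply, Equiv.mulLeft₀_apply, Equiv.subRight_apply]
    rw [show (1 : ZMod p) + (2 * u - 1) = 2 * u by ring,
        show (1 : ZMod p) - (2 * u - 1) ^ 2 = (2 * u) * (2 * (1 - u)) by ring,
        map_mul, map_mul, map_mul, map_mul, MulChar.mul_apply,
        show (4 : ZMod p) = 2 * 2 by norm_num, map_mul]
    ring
  rw [Finset.sum_congr rfl fun u _ => step u, ← Finset.mul_sum, jacobiSum]

/-- **Character-sum identity.**
`Σ_t φ(1+t) Σ_χ (φχ choose χ)³ χ̄(1-t²)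
  = (φ(-2)/(p⁴ g(φ))) Σ_χ g(φχ)² g(χ̄)⁴ g(φχ²) χ̄(4) - (p-1)φ(-2)/p³`. -/
theorem character_sum_identity (p : ℕ) [Fact p.Prime] (hp : Odd p) :
    ∑ t : ZMod p, Φ p (1 + t) *
        ∑ χ : MulChar (ZMod p) ℂ, (binom p (Φ p * χ) χ) ^ 3 * χ⁻¹ (1 - t ^ 2) =
      Φ p (-2) / ((p : ℂ) ^ 4 * gs p (Φ p)) *
          ∑ χ : MulChar (ZMod p) ℂ,
            gs p (Φ p * χ) ^ 2 * gs p χ⁻¹ ^ 4 * gs p (Φ p * χ ^ 2) * χ⁻¹ 4 -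
        ((p : ℂ) - 1) * Φ p (-2) / (p : ℂ) ^ 3 := by
  classical
  have hprime : p.Prime := Fact.out
  have hp2 : p ≠ 2 := by rintro rfl; simp [Nat.odd_iff] at hp
  have h2 : (2 : ZMod p) ≠ 0 := by
    intro h
    have h' : ((2 : ℕ) : ZMod p) = 0 := by exact_mod_cast h
    rw [ZMod.natCast_eq_zero_iff] at h'
    exact hp2 ((Nat.prime_dvd_prime_iff_eq hprime Nat.prime_two).mp h')
  have h4 : (4 : ZMod p) ≠ 0 := by
    have h44 : (4 : ZMod p) = 2 * 2 := by norm_num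
    rw [h44]; exact mul_ne_zero h2 h2
  set ψ : AddChar (ZMod p) ℂ := ZMod.stdAddChar with hψdef
  have hψ : ψ.IsPrimitive := ZMod.isPrimitive_stdAddChar p
  have hψ1 : ψ ≠ 1 := by
    have h := hψ one_ne_zero; rwa [AddChar.mulShift_one] at h
  have hq : (p : ℂ) ≠ 0 := Nat.cast_ne_zero.mpr hprime.ne_zero
  have hcard : ((Fintype.card (ZMod p) : ℂ)) = (p : ℂ) := by rw [ZMod.card]
  have hquad : (Φ p).IsQuadratic := (quadraticChar_isQuadratic (ZMod p)).comp _
  have hΦ1 : Φ p ≠ 1 := by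
    rw [Φ, MulChar.ringHomComp_ne_one_iff Int.cast_injective]
    exact quadraticChar_ne_one (by rwa [ZMod.ringChar_zmod_n])
  have hΦinv : (Φ p)⁻¹ = Φ p := hquad.inv
  have hΦmul : Φ p * Φ p = 1 := by have h := hquad.sq_eq_one; rwa [sq] at h
  have hgs : ∀ χ : MulChar (ZMod p) ℂ, gs p χ = gaussSum χ ψ := by
    intro χ
    unfold gs gaussSum
    refine sum_congr rfl fun x _ => ?_
    rw [hψdef, ZMod.stdAddChar_apply, ZMod.toCircle_apply, θ]
  have εsq : ∀ χ : MulChar (ZMod p) ℂ, χ (-1) * χ (-1) = 1 := fun χ => by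
    rw [← map_mul]; norm_num
  have εinv : ∀ χ : MulChar (ZMod p) ℂ, χ⁻¹ (-1) = χ (-1) := fun χ => by
    rw [MulChar.inv_apply_eq_inv', inv_eq_of_mul_eq_one_right (εsq χ)]
  have Gne : ∀ {χ : MulChar (ZMod p) ℂ}, χ ≠ 1 → gaussSum χ ψ ≠ 0 := fun hχ =>
    gaussSum_ne_zero_of_nontrivial (by rw [hcard]; exact hq) hχ hψ
  have G1 : gaussSum (1 : MulChar (ZMod p) ℂ) ψ = -1 := by
    have h : ∀ x : ZMod p, (1 : MulChar (ZMod p) ℂ) x * ψ x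
        = ψ x - if x = 0 then 1 else 0 := by
      intro x
      by_cases hx : x = 0
      · subst hx
        rw [MulChar.map_nonunit _ (by simp : ¬ IsUnit (0 : ZMod p))]
        simp
      · simp [MulChar.one_apply (isUnit_iff_ne_zero.mpr hx), hx]
    rw [gaussSum]
    simp_rw [h]
    rw [Finset.sum_sub_distrib, AddChar.sum_eq_zero_of_ne_one hψ1]
    simp
  have Gmul : ∀ χ : MulChar (ZMod p) ℂ, χ ≠ 1 →
      gaussSum χ ψ * gaussSum χ⁻¹ ψ = χ (-1) * (p : ℂ) := by
    intro χ hχ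
    have h := gaussSum_mul_gaussSum_eq_card hχ hψ
    have h2' := mul_gaussSum_inv_eq_gaussSum χ⁻¹ ψ
    rw [← h2', εinv, mul_left_comm, h, ZMod.card]
  have Jg : ∀ A B : MulChar (ZMod p) ℂ, A * B ≠ 1 →
      jacobiSum A B = gaussSum A ψ * gaussSum B ψ / gaussSum (A * B) ψ := fun A B h =>
    jacobiSum_eq_gaussSum_mul_gaussSum_div_gaussSum (by rw [hcard]; exact hq) h hψ
  have hΦ2 : Φ p (-2) = Φ p (-1) * Φ p 2 := by
    rw [← map_mul]; norm_num
  have hΦ4 : Φ p 4 = 1 := by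
    have h44 : Φ p 4 = Φ p 2 * Φ p 2 := by rw [← map_mul]; norm_num
    rw [h44, ← MulChar.mul_apply, hΦmul, MulChar.one_apply (isUnit_iff_ne_zero.mpr h2)]
  have gΦsq : gaussSum (Φ p) ψ * gaussSum (Φ p) ψ = Φ p (-1) * (p : ℂ) := by
    have h := Gmul (Φ p) hΦ1; rwa [hΦinv] at h
  -- the termwise claim
  have claim : ∀ χ : MulChar (ZMod p) ℂ,
      (binom p (Φ p * χ) χ) ^ 3 * (Φ p 2 * χ⁻¹ 4 * jacobiSum (Φ p * χ⁻¹) χ⁻¹) =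
        Φ p (-2) / ((p : ℂ) ^ 4 * gaussSum (Φ p) ψ) *
          (gaussSum (Φ p * χ) ψ ^ 2 * gaussSum χ⁻¹ ψ ^ 4 *
            gaussSum (Φ p * χ ^ 2) ψ * χ⁻¹ 4) -
        (if χ = Φ p then ((p : ℂ) - 1) * Φ p (-2) / (p : ℂ) ^ 3 else 0) := by
    intro χ
    have hbin : binom p (Φ p * χ) χ = χ (-1) / (p : ℂ) * jacobiSum (Φ p * χ) χ⁻¹ := rfl
    by_cases hχ1 : χ = 1
    · subst hχ1
      rw [if_neg (fun h => hΦ1 h.symm), hbin]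
      rw [inv_one, mul_one, one_pow, mul_one]
      rw [jacobiSum_comm (Φ p) 1, jacobiSum_one_nontrivial hΦ1]
      rw [MulChar.one_apply (isUnit_one.neg), MulChar.one_apply (isUnit_iff_ne_zero.mpr h4)]
      rw [G1, hΦ2, sub_zero]
      linear_combination alg_one (p : ℂ) (gaussSum (Φ p) ψ) (Φ p (-1)) (Φ p 2)
        hq (Gne hΦ1) (εsq (Φ p)) gΦsq
    by_cases hχΦ : χ = Φ p
    · subst hχΦ
      rw [if_pos rfl, hbin]
      have hsq : Φ p ^ 2 = 1 := by rw [sq, hΦmul]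
      rw [hΦinv, hΦmul, hsq, mul_one]
      rw [jacobiSum_one_nontrivial hΦ1, hΦ4, G1, hΦ2]
      linear_combination alg_phi (p : ℂ) (gaussSum (Φ p) ψ) (Φ p (-1)) (Φ p 2)
        hq (Gne hΦ1) (εsq (Φ p)) gΦsq
    -- now χ ≠ 1 and χ ≠ Φ p
    have hA : Φ p * χ ≠ 1 := by
      intro h
      exact hχΦ (by rw [eq_inv_of_mul_eq_one_right h, hΦinv])
    have hA' : Φ p * χ⁻¹ ≠ 1 := by
      intro h
      have h' : χ⁻¹ = (Φ p)⁻¹ := eq_inv_of_mul_eq_one_right h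
      exact hχΦ (by rw [← inv_inv χ, h', inv_inv])
    have hAB : (Φ p * χ) * χ⁻¹ = Φ p := by rw [mul_assoc, mul_inv_cancel, mul_one]
    have hBne : χ⁻¹ ≠ 1 := inv_ne_one.mpr hχ1
    have j1eq : jacobiSum (Φ p * χ) χ⁻¹ =
        gaussSum (Φ p * χ) ψ * gaussSum χ⁻¹ ψ / gaussSum (Φ p) ψ := by
      rw [Jg _ _ (by rw [hAB]; exact hΦ1), hAB]
    have haa' : gaussSum (Φ p * χ) ψ * gaussSum (Φ p * χ⁻¹) ψ
        = Φ p (-1) * χ (-1) * (p : ℂ) := by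
      have h := Gmul (Φ p * χ) hA
      rwa [mul_inv, hΦinv, MulChar.mul_apply] at h
    by_cases hD : Φ p * χ ^ 2 = 1
    · -- χ² = Φ
      have hδ1 : Φ p (-1) = 1 := by
        have hx : Φ p (-1) * (χ ^ 2) (-1) = 1 := by
          rw [← MulChar.mul_apply, hD, MulChar.one_apply isUnit_one.neg]
        have hy : (χ ^ 2) (-1) = 1 := by
          rw [MulChar.pow_apply' χ two_ne_zero, pow_two]; exact εsq χ
        rwa [hy, mul_one] at hx
      have hba : Φ p * χ = χ⁻¹ := by
        have h : (Φ p * χ) * χ = 1 := by rw [mul_assoc, ← sq]; exact hD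
        exact eq_inv_of_mul_eq_one_left h
      have hinv2 : (Φ p * χ⁻¹)⁻¹ = χ⁻¹ := by
        rw [mul_inv, hΦinv, inv_inv, hba]
      have j2eq : jacobiSum (Φ p * χ⁻¹) χ⁻¹ = -(χ (-1)) := by
        have hh := jacobiSum_nontrivial_inv hA'
        rw [hinv2, MulChar.mul_apply, εinv, hδ1, one_mul] at hh
        exact hh
      have hffq : gaussSum (Φ p) ψ * gaussSum (Φ p) ψ = (p : ℂ) := by
        rw [gΦsq, hδ1, one_mul]
      rw [if_neg hχΦ, hbin, j1eq, j2eq, hD, G1, hba, hΦ2, hδ1, one_mul, sub_zero]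
      linear_combination alg_quartic (p : ℂ) (gaussSum (Φ p) ψ) (gaussSum χ⁻¹ ψ)
        (χ (-1)) (Φ p 2) (χ⁻¹ 4) hq (Gne hΦ1) (εsq χ) hffq
    · -- generic case
      have hDinv : (Φ p * χ⁻¹) * χ⁻¹ = (Φ p * χ ^ 2)⁻¹ := by
        rw [eq_inv_iff_mul_eq_one, sq]
        calc Φ p * χ⁻¹ * χ⁻¹ * (Φ p * (χ * χ))
            = (Φ p * Φ p) * ((χ⁻¹ * χ) * (χ⁻¹ * χ)) := by
              simp only [mul_assoc, mul_comm, mul_left_comm]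
          _ = 1 := by rw [hΦmul, inv_mul_cancel]; simp
      have hDinvne : (Φ p * χ ^ 2)⁻¹ ≠ 1 := inv_ne_one.mpr hD
      have j2eq : jacobiSum (Φ p * χ⁻¹) χ⁻¹ =
          gaussSum (Φ p * χ⁻¹) ψ * gaussSum χ⁻¹ ψ / gaussSum ((Φ p * χ ^ 2)⁻¹) ψ := by
        rw [Jg _ _ (by rw [hDinv]; exact hDinvne), hDinv]
      have hdd' : gaussSum (Φ p * χ ^ 2) ψ * gaussSum ((Φ p * χ ^ 2)⁻¹) ψ
          = Φ p (-1) * (p : ℂ) := by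
        have h := Gmul (Φ p * χ ^ 2) hD
        have hy : (χ ^ 2) (-1) = 1 := by
          rw [MulChar.pow_apply' χ two_ne_zero, pow_two]; exact εsq χ
        rwa [MulChar.mul_apply, hy, mul_one] at h
      rw [if_neg hχΦ, hbin, j1eq, j2eq, hΦ2, sub_zero]
      linear_combination alg_gen (p : ℂ) (gaussSum (Φ p) ψ) (gaussSum (Φ p * χ) ψ)
        (gaussSum χ⁻¹ ψ) (gaussSum (Φ p * χ ^ 2) ψ)
        (gaussSum (Φ p * χ) ψ * gaussSum χ⁻¹ ψ / gaussSum (Φ p) ψ)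
        (gaussSum (Φ p * χ⁻¹) ψ * gaussSum χ⁻¹ ψ / gaussSum ((Φ p * χ ^ 2)⁻¹) ψ)
        (gaussSum (Φ p * χ⁻¹) ψ) (gaussSum ((Φ p * χ ^ 2)⁻¹) ψ)
        (χ (-1)) (Φ p (-1)) (Φ p 2) (χ⁻¹ 4)
        hq (Gne hΦ1) (Gne hA) (Gne hD) (εsq χ) (εsq (Φ p)) gΦsq rfl rfl haa' hdd'
  -- assemble
  have swap : (∑ t : ZMod p, Φ p (1 + t) *
        ∑ χ : MulChar (ZMod p) ℂ, (binom p (Φ p * χ) χ) ^ 3 * χ⁻¹ (1 - t ^ 2))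
      = ∑ χ : MulChar (ZMod p) ℂ, (binom p (Φ p * χ) χ) ^ 3 *
          ∑ t : ZMod p, Φ p (1 + t) * χ⁻¹ (1 - t ^ 2) := by
    simp_rw [Finset.mul_sum]
    rw [Finset.sum_comm]
    exact Finset.sum_congr rfl fun χ _ => Finset.sum_congr rfl fun t _ => by ring
  rw [swap]
  simp_rw [hgs, innerSumAux p h2]
  rw [Finset.sum_congr rfl fun χ _ => claim χ, Finset.sum_sub_distrib, Finset.mul_sum]
  congr 1
  simp
end
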